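/- arXiv:1709.03418 — 4 statements merged into one kernel-verified Lean document; each statement's English description precedes it below -/
import Mathlib

section
/- Let Γ be a symmetric n×n real matrix with entries Γ_{ij} = σ²h(i∧j) + (1/2)h^{2H}(i^{2H} + j^{2H} − |i−j|^{2H}) for 1 ≤ i,j ≤ n, where σ > 0, h > 0 and H ∈ (1/2,1). Then the largest eigenvalue λ_max of Γ satisfies λ_max ≤ C·n^{2H+1} for some constant C > 0 depending only on σ, h, H. -/
open Matrix

theorem stmt_3 (σ h H : ℝ) (hσ : 0 < σ) (hh : 0 < h) (hH1 : 1/2 < H) (hH2 : H < 1) :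
    ∃ C > (0 : ℝ), ∀ (n : ℕ) (Γ : Matrix (Fin n) (Fin n) ℝ),
      (∀ i j : Fin n, Γ i j =
        σ ^ 2 * h * (min ((i : ℝ) + 1) ((j : ℝ) + 1)) +
          (1 / 2) * h ^ (2 * H) *
            (((i : ℝ) + 1) ^ (2 * H) + ((j : ℝ) + 1) ^ (2 * H)
              - |(i : ℝ) - (j : ℝ)| ^ (2 * H))) →
      ∀ (hΓ : Γ.IsHermitian) (i : Fin n),
        hΓ.eigenvalues i ≤ C * (n : ℝ) ^ (2 * H + 1) := by
  have hb : (0:ℝ) < h ^ (2*H) := Real.rpow_pos_of_pos hh _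
  refine ⟨σ^2*h + (3/2) * h ^ (2*H), by positivity, ?_⟩
  intro n Γ hΓeq hΓ i
  -- setup
  have hn1 : (1:ℝ) ≤ (n:ℝ) := by
    have := i.2; exact_mod_cast Nat.one_le_iff_ne_zero.2 (by omega)
  have hN0 : (0:ℝ) < (n:ℝ) := by linarith
  set N : ℝ := (n:ℝ)
  have hNH : (0:ℝ) < N ^ (2*H) := Real.rpow_pos_of_pos hN0 _
  -- the eigenvalue is an eigenvalue of toLin' Γ
  set μ := hΓ.eigenvalues i with hμ
  have hv : Module.End.HasEigenvalue (Matrix.toLin' Γ) μ := by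
    refine Module.End.hasEigenvalue_of_hasEigenvector
      (x := ⇑(hΓ.eigenvectorBasis i)) ⟨?_, ?_⟩
    · rw [Module.End.mem_eigenspace_iff, Matrix.toLin'_apply]
      exact hΓ.mulVec_eigenvectorBasis i
    · intro hz
      have := hΓ.eigenvectorBasis.orthonormal.ne_zero i
      exact this (by ext j; exact congrFun hz j)
  obtain ⟨k, hk⟩ := eigenvalue_mem_ball hv
  rw [Metric.mem_closedBall, Real.dist_eq] at hk
  -- entrywise bound
  have hentry : ∀ j : Fin n, |Γ k j| ≤ (σ^2*h + (3/2) * h ^ (2*H)) * N ^ (2*H) := by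
    intro j
    have hkN : (k:ℝ) + 1 ≤ N := by
      have : (k:ℕ) + 1 ≤ n := k.2
      show (k:ℝ) + 1 ≤ (n:ℝ); exact_mod_cast this
    have hjN : (j:ℝ) + 1 ≤ N := by
      have : (j:ℕ) + 1 ≤ n := j.2
      show (j:ℝ) + 1 ≤ (n:ℝ); exact_mod_cast this
    have hk0 : (0:ℝ) ≤ (k:ℝ) := Nat.cast_nonneg _
    have hj0 : (0:ℝ) ≤ (j:ℝ) := Nat.cast_nonneg _
    have hmin : min ((k:ℝ)+1) ((j:ℝ)+1) ≤ N := le_trans (min_le_left _ _) hkN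
    have hmin0 : (0:ℝ) ≤ min ((k:ℝ)+1) ((j:ℝ)+1) := le_min (by linarith) (by linarith)
    have hNle : N ≤ N ^ (2*H) := by
      calc N = N ^ (1:ℝ) := (Real.rpow_one N).symm
        _ ≤ N ^ (2*H) := Real.rpow_le_rpow_of_exponent_le hn1 (by linarith)
    have h2H0 : (0:ℝ) ≤ 2*H := by linarith
    have hkH : ((k:ℝ)+1) ^ (2*H) ≤ N ^ (2*H) :=
      Real.rpow_le_rpow (by linarith) hkN h2H0
    have hjH : ((j:ℝ)+1) ^ (2*H) ≤ N ^ (2*H) :=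
      Real.rpow_le_rpow (by linarith) hjN h2H0
    have habs : |(k:ℝ) - (j:ℝ)| ≤ N := by
      rw [abs_le]; constructor <;> nlinarith
    have hdH : |(k:ℝ) - (j:ℝ)| ^ (2*H) ≤ N ^ (2*H) :=
      Real.rpow_le_rpow (abs_nonneg _) habs h2H0
    have hkH0 : (0:ℝ) ≤ ((k:ℝ)+1) ^ (2*H) := Real.rpow_nonneg (by linarith) _
    have hjH0 : (0:ℝ) ≤ ((j:ℝ)+1) ^ (2*H) := Real.rpow_nonneg (by linarith) _
    have hdH0 : (0:ℝ) ≤ |(k:ℝ) - (j:ℝ)| ^ (2*H) := Real.rpow_nonneg (abs_nonneg _) _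
    have hσh : (0:ℝ) < σ^2*h := by positivity
    rw [hΓeq k j, abs_le]
    constructor <;> linarith [mul_le_mul_of_nonneg_left hmin (le_of_lt hσh),
      mul_le_mul_of_nonneg_left hNle (le_of_lt hσh),
      mul_nonneg (le_of_lt hσh) hmin0,
      mul_le_mul_of_nonneg_left hkH (le_of_lt hb),
      mul_le_mul_of_nonneg_left hjH (le_of_lt hb),
      mul_le_mul_of_nonneg_left hdH (le_of_lt hb),
      mul_nonneg (le_of_lt hb) hkH0, mul_nonneg (le_of_lt hb) hjH0,
      mul_nonneg (le_of_lt hb) hdH0]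
  -- combine
  have hsum : μ ≤ ∑ j : Fin n, |Γ k j| := by
    have h1 : μ - Γ k k ≤ ∑ j ∈ Finset.univ.erase k, |Γ k j| := by
      calc μ - Γ k k ≤ |μ - Γ k k| := le_abs_self _
        _ ≤ ∑ j ∈ Finset.univ.erase k, ‖Γ k j‖ := hk
        _ = ∑ j ∈ Finset.univ.erase k, |Γ k j| := by simp [Real.norm_eq_abs]
    have h2 : ∑ j : Fin n, |Γ k j|
        = |Γ k k| + ∑ j ∈ Finset.univ.erase k, |Γ k j| :=
      (Finset.add_sum_erase _ _ (Finset.mem_univ k)).symm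
    have h3 : Γ k k ≤ |Γ k k| := le_abs_self _
    linarith
  have hsum2 : ∑ j : Fin n, |Γ k j| ≤ (n:ℝ) * ((σ^2*h + (3/2) * h ^ (2*H)) * N ^ (2*H)) := by
    calc ∑ j : Fin n, |Γ k j| ≤ ∑ _j : Fin n, (σ^2*h + (3/2) * h ^ (2*H)) * N ^ (2*H) :=
          Finset.sum_le_sum (fun j _ => hentry j)
      _ = (n:ℝ) * ((σ^2*h + (3/2) * h ^ (2*H)) * N ^ (2*H)) := by
          simp [Finset.sum_const, Finset.card_univ, mul_comm]
  have hpow : N ^ (2*H) * N = N ^ (2*H+1) := by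
    rw [Real.rpow_add hN0, Real.rpow_one]
  calc μ ≤ (n:ℝ) * ((σ^2*h + (3/2) * h ^ (2*H)) * N ^ (2*H)) := le_trans hsum hsum2
    _ = (σ^2*h + (3/2) * h ^ (2*H)) * (N ^ (2*H) * N) := by ring
    _ = (σ^2*h + (3/2) * h ^ (2*H)) * N ^ (2*H+1) := by rw [hpow]
end

section
/- Let g : [0,T]×[0,T] → ℝ be continuously differentiable and satisfy, for all 0 ≤ s ≤ t ≤ T, the identity σ² g(s,t) + H(2H−1)∫₀ᵗ g(r,t)|r−s|^{2H−2} dr = σ, with σ > 0 and H ∈ (1/2,1). Then for all t ∈ [0,T], (d/dt) ∫₀ᵗ g(s,t) ds = σ g(t,t)². -/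
open MeasureTheory intervalIntegral Set

lemma aux_II_of_bound {f : ℝ → ℝ} {a b C : ℝ}
    (hm : AEStronglyMeasurable f (volume.restrict (Set.uIoc a b)))
    (h : ∀ x ∈ Set.uIoc a b, |f x| ≤ C) : IntervalIntegrable f volume a b := by
  rw [intervalIntegrable_iff]
  have : IsFiniteMeasure (volume.restrict (Set.uIoc a b)) :=
    ⟨by rw [Measure.restrict_apply_univ]; exact measure_Ioc_lt_top⟩
  refine Integrable.mono' (integrable_const C) hm ?_
  refine (ae_restrict_iff' measurableSet_uIoc).2 (Filter.Eventually.of_forall fun x hx => ?_)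
  simpa using h x hx

lemma aux_abspow_II {p : ℝ} (hp : -1 < p) (a b : ℝ) :
    IntervalIntegrable (fun x : ℝ => |x| ^ p) volume a b := by
  have key : ∀ c : ℝ, 0 ≤ c → IntervalIntegrable (fun x : ℝ => |x| ^ p) volume 0 c := by
    intro c hc
    have h1 := intervalIntegrable_rpow' (a := 0) (b := c) hp
    rw [intervalIntegrable_iff] at h1 ⊢
    refine h1.congr_fun (fun x hx => ?_) measurableSet_uIoc
    rw [Set.uIoc_of_le hc] at hx
    rw [abs_of_pos hx.1]
  have key' : ∀ c : ℝ, IntervalIntegrable (fun x : ℝ => |x| ^ p) volume 0 c := by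
    intro c
    rcases le_total 0 c with hc | hc
    · exact key c hc
    · rw [IntervalIntegrable.iff_comp_neg]
      simpa using key (-c) (by linarith)
  exact (key' a).symm.trans (key' b)

lemma aux_abs_rpow_II {p : ℝ} (hp : -1 < p) (a b s : ℝ) :
    IntervalIntegrable (fun x : ℝ => |x - s| ^ p) volume a b := by
  have := (aux_abspow_II hp (a - s) (b - s)).comp_sub_right s
  simpa using this

lemma aux_rpow_subadd {q : ℝ} (hq0 : 0 ≤ q) (hq1 : q ≤ 1) {x y : ℝ} (hx : 0 ≤ x) (hy : 0 ≤ y) :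
    (x + y) ^ q ≤ x ^ q + y ^ q := by
  have h := NNReal.rpow_add_le_add_rpow (Real.toNNReal x) (Real.toNNReal y) hq0 hq1
  rw [← Real.toNNReal_add hx hy] at h
  have h2 := NNReal.coe_le_coe.2 h
  rw [NNReal.coe_add, NNReal.coe_rpow, NNReal.coe_rpow, NNReal.coe_rpow,
    Real.coe_toNNReal _ hx, Real.coe_toNNReal _ hy, Real.coe_toNNReal _ (add_nonneg hx hy)] at h2
  exact h2

lemma aux_abspow_bound {p : ℝ} (hp : -1 < p) (hp0 : p < 0) :
    ∀ {c e : ℝ}, c ≤ e → ∫ x in c..e, |x| ^ p ≤ 2 * (e - c) ^ (p + 1) / (p + 1) := by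
  have hq : 0 < p + 1 := by linarith
  have hq1 : p + 1 ≤ 1 := by linarith
  have pos : ∀ {c e : ℝ}, 0 ≤ c → c ≤ e → ∫ x in c..e, |x| ^ p ≤ (e - c) ^ (p + 1) / (p + 1) := by
    intro c e hc hce
    have hcg : ∫ x in c..e, |x| ^ p = ∫ x in c..e, x ^ p := by
      apply intervalIntegral.integral_congr
      intro x hx
      rw [Set.uIcc_of_le hce] at hx
      simp only
      rw [abs_of_nonneg (hc.trans hx.1)]
    rw [hcg, integral_rpow (Or.inl hp)]
    have h2 : e ^ (p + 1) ≤ (e - c) ^ (p + 1) + c ^ (p + 1) := by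
      have := aux_rpow_subadd hq.le hq1 (x := e - c) (y := c) (by linarith) hc
      rwa [sub_add_cancel] at this
    gcongr
    linarith
  have neg : ∀ {c e : ℝ}, e ≤ 0 → c ≤ e → ∫ x in c..e, |x| ^ p ≤ (e - c) ^ (p + 1) / (p + 1) := by
    intro c e he hce
    have hflip := intervalIntegral.integral_comp_neg (a := -e) (b := -c) (fun x => |x| ^ p)
    simp only [abs_neg, neg_neg] at hflip
    have : ∫ x in c..e, |x| ^ p = ∫ x in -e..-c, |x| ^ p := hflip.symm
    rw [this]
    have := pos (c := -e) (e := -c) (by linarith) (by linarith)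
    convert this using 3
    ring
  intro c e hce
  have hXnn : (0:ℝ) ≤ (e - c) ^ (p + 1) := Real.rpow_nonneg (by linarith) _
  rcases le_total 0 c with hc | hc
  · refine (pos hc hce).trans ?_
    rw [div_le_div_iff₀ hq hq]
    nlinarith
  rcases le_total e 0 with he | he
  · refine (neg he hce).trans ?_
    rw [div_le_div_iff₀ hq hq]
    nlinarith
  · have hsplit := intervalIntegral.integral_add_adjacent_intervals
      (aux_abspow_II hp c 0) (aux_abspow_II hp 0 e)
    rw [← hsplit]
    have b1 := neg (le_refl 0) hc
    have b2 := pos (le_refl 0) he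
    have m1 : (0 - c) ^ (p + 1) ≤ (e - c) ^ (p + 1) :=
      Real.rpow_le_rpow (by linarith) (by linarith) hq.le
    have m2 : (e - 0) ^ (p + 1) ≤ (e - c) ^ (p + 1) :=
      Real.rpow_le_rpow (by linarith) (by linarith) hq.le
    have : (0 - c) ^ (p + 1) / (p + 1) + (e - 0) ^ (p + 1) / (p + 1)
        ≤ 2 * (e - c) ^ (p + 1) / (p + 1) := by
      rw [← add_div, div_le_div_iff₀ hq hq]
      nlinarith
    linarith

lemma aux_kernel_bound {p : ℝ} (hp : -1 < p) (hp0 : p < 0) (s : ℝ) {a b : ℝ} (hab : a ≤ b) :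
    ∫ x in a..b, |x - s| ^ p ≤ 2 * (b - a) ^ (p + 1) / (p + 1) := by
  have h := intervalIntegral.integral_comp_sub_right (a := a) (b := b) (fun x => |x| ^ p) s
  rw [h]
  have := aux_abspow_bound hp hp0 (c := a - s) (e := b - s) (by linarith)
  convert this using 3
  ring

lemma aux_weighted_kernel_II {p : ℝ} (hp : -1 < p) {f : ℝ → ℝ} {a b M : ℝ} (s : ℝ)
    (hm : AEStronglyMeasurable f (volume.restrict (Set.uIoc a b)))
    (hM : ∀ x ∈ Set.uIoc a b, |f x| ≤ M) :
    IntervalIntegrable (fun x => f x * |x - s| ^ p) volume a b := by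
  have base := (aux_abs_rpow_II hp a b s).const_mul M
  rw [intervalIntegrable_iff] at base ⊢
  refine base.mono' (hm.mul ((by fun_prop : Measurable fun x : ℝ => |x - s| ^ p).aestronglyMeasurable)) ?_
  refine (ae_restrict_iff' measurableSet_uIoc).2 (Filter.Eventually.of_forall fun x hx => ?_)
  have hk : (0:ℝ) ≤ |x - s| ^ p := Real.rpow_nonneg (abs_nonneg _) _
  have : ‖f x * |x - s| ^ p‖ = |f x| * |x - s| ^ p := by
    rw [Real.norm_eq_abs, abs_mul, abs_of_nonneg hk]
  rw [this]
  exact mul_le_mul_of_nonneg_right (hM x hx) hk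

lemma aux_weighted_kernel_bound {p : ℝ} (hp : -1 < p) (hp0 : p < 0) {f : ℝ → ℝ}
    {a b M : ℝ} (s : ℝ) (hab : a ≤ b) (hM0 : 0 ≤ M)
    (hm : AEStronglyMeasurable f (volume.restrict (Set.uIoc a b)))
    (hM : ∀ x ∈ Set.Icc a b, |f x| ≤ M) :
    |∫ x in a..b, f x * |x - s| ^ p| ≤ M * (2 * (b - a) ^ (p + 1) / (p + 1)) := by
  have hsub : Set.uIoc a b ⊆ Set.Icc a b := by
    rw [Set.uIoc_of_le hab]; exact Set.Ioc_subset_Icc_self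
  have h1 : |∫ x in a..b, f x * |x - s| ^ p| ≤ ∫ x in a..b, |f x * |x - s| ^ p| :=
    intervalIntegral.abs_integral_le_integral_abs hab
  have h2 : ∫ x in a..b, |f x * |x - s| ^ p| ≤ ∫ x in a..b, M * |x - s| ^ p := by
    apply intervalIntegral.integral_mono_on hab
    · exact (aux_weighted_kernel_II hp s hm fun x hx => hM x (hsub hx)).abs
    · exact (aux_abs_rpow_II hp a b s).const_mul M
    · intro x hx
      have hk : (0:ℝ) ≤ |x - s| ^ p := Real.rpow_nonneg (abs_nonneg _) _
      rw [abs_mul, abs_of_nonneg hk]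
      exact mul_le_mul_of_nonneg_right (hM x hx) hk
  have h3 : ∫ x in a..b, M * |x - s| ^ p = M * ∫ x in a..b, |x - s| ^ p :=
    intervalIntegral.integral_const_mul _ _
  have h4 := aux_kernel_bound hp hp0 s hab
  calc |∫ x in a..b, f x * |x - s| ^ p| ≤ M * ∫ x in a..b, |x - s| ^ p := by
        rw [← h3]; exact h1.trans h2
    _ ≤ M * (2 * (b - a) ^ (p + 1) / (p + 1)) := mul_le_mul_of_nonneg_left h4 hM0

lemma aux_prod_integrable {p : ℝ} (hp : -1 < p) (hp0 : p < 0) (f₁ f₂ : ℝ → ℝ)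
    (h₁ : Continuous f₁) (h₂ : Continuous f₂) (u v : ℝ) (hu : 0 ≤ u) (hv : 0 ≤ v) :
    Integrable (fun z : ℝ × ℝ => f₁ z.1 * (f₂ z.2 * |z.2 - z.1| ^ p))
      ((volume.restrict (Set.Ioc 0 u)).prod (volume.restrict (Set.Ioc 0 v))) := by
  obtain ⟨C₁, hC₁⟩ := (isCompact_Icc (a := (0:ℝ)) (b := u)).exists_bound_of_continuousOn
    h₁.continuousOn
  obtain ⟨C₂, hC₂⟩ := (isCompact_Icc (a := (0:ℝ)) (b := v)).exists_bound_of_continuousOn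
    h₂.continuousOn
  have hC₁0 : 0 ≤ C₁ := le_trans (norm_nonneg _) (hC₁ 0 ⟨le_refl _, hu⟩)
  have hC₂0 : 0 ≤ C₂ := le_trans (norm_nonneg _) (hC₂ 0 ⟨le_refl _, hv⟩)
  have hmeas_ker : Measurable (fun z : ℝ × ℝ => |z.2 - z.1| ^ p) := by fun_prop
  have hmeas_base : AEStronglyMeasurable (fun z : ℝ × ℝ => C₁ * C₂ * |z.2 - z.1| ^ p)
      ((volume.restrict (Set.Ioc 0 u)).prod (volume.restrict (Set.Ioc 0 v))) :=
    (hmeas_ker.const_mul _).aestronglyMeasurable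
  have hfin : IsFiniteMeasure (volume.restrict (Set.Ioc (0:ℝ) u)) :=
    ⟨by rw [Measure.restrict_apply_univ]; exact measure_Ioc_lt_top⟩
  have base : Integrable (fun z : ℝ × ℝ => C₁ * C₂ * |z.2 - z.1| ^ p)
      ((volume.restrict (Set.Ioc 0 u)).prod (volume.restrict (Set.Ioc 0 v))) := by
    rw [MeasureTheory.integrable_prod_iff hmeas_base]
    constructor
    · refine Filter.Eventually.of_forall fun s => ?_
      have h := (aux_abs_rpow_II hp 0 v s).const_mul (C₁ * C₂)
      rw [intervalIntegrable_iff, Set.uIoc_of_le hv] at h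
      exact h
    · refine Integrable.mono' (integrable_const (|C₁ * C₂| * (2 * (v - 0) ^ (p + 1) / (p + 1))))
        (hmeas_base.norm.integral_prod_right') ?_
      refine Filter.Eventually.of_forall fun s => ?_
      have hnn : 0 ≤ ∫ r, ‖C₁ * C₂ * |r - s| ^ p‖ ∂(volume.restrict (Set.Ioc 0 v)) :=
        integral_nonneg fun r => norm_nonneg _
      rw [Real.norm_of_nonneg hnn]
      have heq : ∫ r, ‖C₁ * C₂ * |r - s| ^ p‖ ∂(volume.restrict (Set.Ioc 0 v))
          = |C₁ * C₂| * ∫ r in (0:ℝ)..v, |r - s| ^ p := by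
        rw [intervalIntegral.integral_of_le hv, ← MeasureTheory.integral_const_mul]
        apply MeasureTheory.integral_congr_ae
        refine Filter.Eventually.of_forall fun r => ?_
        beta_reduce
        rw [Real.norm_eq_abs, abs_mul, abs_of_nonneg (Real.rpow_nonneg (abs_nonneg _) _)]
      rw [heq]
      exact mul_le_mul_of_nonneg_left (aux_kernel_bound hp hp0 s hv) (abs_nonneg _)
  refine base.mono' ?_ ?_
  · exact ((h₁.measurable.comp measurable_fst).mul
      ((h₂.measurable.comp measurable_snd).mul hmeas_ker)).aestronglyMeasurable
  · rw [Measure.prod_restrict]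
    refine (ae_restrict_iff' (measurableSet_Ioc.prod measurableSet_Ioc)).2
      (Filter.Eventually.of_forall fun z hz => ?_)
    have hk : (0:ℝ) ≤ |z.2 - z.1| ^ p := Real.rpow_nonneg (abs_nonneg _) _
    have hz1 : z.1 ∈ Set.Icc (0:ℝ) u := Set.Ioc_subset_Icc_self hz.1
    have hz2 : z.2 ∈ Set.Icc (0:ℝ) v := Set.Ioc_subset_Icc_self hz.2
    have e1 : |f₁ z.1| ≤ C₁ := hC₁ _ hz1
    have e2 : |f₂ z.2| ≤ C₂ := hC₂ _ hz2
    have : ‖f₁ z.1 * (f₂ z.2 * |z.2 - z.1| ^ p)‖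
        = |f₁ z.1| * (|f₂ z.2| * |z.2 - z.1| ^ p) := by
      rw [Real.norm_eq_abs, abs_mul, abs_mul, abs_of_nonneg hk]
    rw [this]
    calc |f₁ z.1| * (|f₂ z.2| * |z.2 - z.1| ^ p)
        ≤ C₁ * (C₂ * |z.2 - z.1| ^ p) := by
          apply mul_le_mul e1 (mul_le_mul_of_nonneg_right e2 hk)
            (by positivity) hC₁0
    _ = C₁ * C₂ * |z.2 - z.1| ^ p := by ring

lemma aux_swap {p : ℝ} (hp : -1 < p) (hp0 : p < 0) (f₁ f₂ : ℝ → ℝ)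
    (h₁ : Continuous f₁) (h₂ : Continuous f₂) (u v : ℝ) (hu : 0 ≤ u) (hv : 0 ≤ v) :
    ∫ s in (0:ℝ)..u, f₁ s * ∫ r in (0:ℝ)..v, f₂ r * |r - s| ^ p
      = ∫ r in (0:ℝ)..v, f₂ r * ∫ s in (0:ℝ)..u, f₁ s * |s - r| ^ p := by
  rw [intervalIntegral.integral_of_le hu, intervalIntegral.integral_of_le hv]
  simp_rw [intervalIntegral.integral_of_le hv, intervalIntegral.integral_of_le hu]
  have key := MeasureTheory.integral_integral_swap
    (f := fun s r => f₁ s * (f₂ r * |r - s| ^ p))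
    (μ := volume.restrict (Set.Ioc 0 u)) (ν := volume.restrict (Set.Ioc 0 v))
    (aux_prod_integrable hp hp0 f₁ f₂ h₁ h₂ u v hu hv)
  calc ∫ s in Set.Ioc (0:ℝ) u, f₁ s * ∫ r in Set.Ioc (0:ℝ) v, f₂ r * |r - s| ^ p
      = ∫ s in Set.Ioc (0:ℝ) u, ∫ r in Set.Ioc (0:ℝ) v, f₁ s * (f₂ r * |r - s| ^ p) := by
        apply MeasureTheory.integral_congr_ae
        refine Filter.Eventually.of_forall fun s => ?_
        beta_reduce
        rw [MeasureTheory.integral_const_mul]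
    _ = ∫ r in Set.Ioc (0:ℝ) v, ∫ s in Set.Ioc (0:ℝ) u, f₁ s * (f₂ r * |r - s| ^ p) := key
    _ = ∫ r in Set.Ioc (0:ℝ) v, f₂ r * ∫ s in Set.Ioc (0:ℝ) u, f₁ s * |s - r| ^ p := by
        apply MeasureTheory.integral_congr_ae
        refine Filter.Eventually.of_forall fun r => ?_
        beta_reduce
        have : (fun s => f₁ s * (f₂ r * |r - s| ^ p))
            = fun s => f₂ r * (f₁ s * |s - r| ^ p) := by
          funext s; rw [abs_sub_comm]; ring
        rw [this, MeasureTheory.integral_const_mul]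

lemma aux_paramfix (g d : ℝ → ℝ → ℝ) (hgc : Continuous (Function.uncurry g))
    (hdc : Continuous (Function.uncurry d))
    (hd : ∀ r τ, HasDerivAt (fun τ => g r τ) (d r τ) τ)
    (k : ℝ → ℝ) (K : ℝ) (hkm : Measurable k) (b t : ℝ)
    (hkb : ∀ r ∈ Set.uIcc (0:ℝ) b, |k r| ≤ K) :
    HasDerivAt (fun τ => ∫ r in (0:ℝ)..b, g r τ * k r) (∫ r in (0:ℝ)..b, d r t * k r) t := by
  have hgr : ∀ τ, Continuous fun r => g r τ := fun τ =>
    hgc.comp (continuous_id.prodMk continuous_const)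
  have hdr : ∀ τ, Continuous fun r => d r τ := fun τ =>
    hdc.comp (continuous_id.prodMk continuous_const)
  have hK0 : 0 ≤ K := le_trans (abs_nonneg _) (hkb 0 Set.left_mem_uIcc)
  obtain ⟨Cd, hCd⟩ := ((isCompact_uIcc (a := (0:ℝ)) (b := b)).prod
    (isCompact_Icc (a := t - 1) (b := t + 1))).exists_bound_of_continuousOn hdc.continuousOn
  have hCd0 : 0 ≤ Cd := le_trans (norm_nonneg _)
    (hCd (0, t) ⟨Set.left_mem_uIcc, by constructor <;> linarith⟩)
  obtain ⟨Cg, hCg⟩ := (isCompact_uIcc (a := (0:ℝ)) (b := b)).exists_bound_of_continuousOn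
    (hgr t).continuousOn
  have hCg0 : 0 ≤ Cg := le_trans (norm_nonneg _) (hCg 0 Set.left_mem_uIcc)
  have hsub : Set.uIoc (0:ℝ) b ⊆ Set.uIcc (0:ℝ) b := Set.uIoc_subset_uIcc
  refine (intervalIntegral.hasDerivAt_integral_of_dominated_loc_of_deriv_le
    (F := fun τ r => g r τ * k r) (F' := fun τ r => d r τ * k r)
    (bound := fun _ => Cd * K) (Metric.ball_mem_nhds t zero_lt_one) ?_ ?_ ?_ ?_ ?_ ?_).2
  · exact Filter.Eventually.of_forall fun τ =>
      ((hgr τ).aestronglyMeasurable.mul hkm.aestronglyMeasurable)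
  · refine aux_II_of_bound (C := Cg * K)
      ((hgr t).aestronglyMeasurable.mul hkm.aestronglyMeasurable) fun x hx => ?_
    rw [abs_mul]
    exact mul_le_mul (by simpa using hCg x (hsub hx)) (hkb x (hsub hx)) (abs_nonneg _) hCg0
  · exact (hdr t).aestronglyMeasurable.mul hkm.aestronglyMeasurable
  · refine Filter.Eventually.of_forall fun r hr => fun x hx => ?_
    rw [Real.norm_eq_abs, abs_mul]
    refine mul_le_mul ?_ (hkb r (hsub hr)) (abs_nonneg _) hCd0
    have hx' : x ∈ Set.Icc (t - 1) (t + 1) := by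
      have := mem_ball_iff_norm.1 hx
      rw [Real.norm_eq_abs, abs_sub_lt_iff] at this
      constructor <;> linarith [this.1, this.2]
    simpa using hCd (r, x) ⟨hsub hr, hx'⟩
  · exact intervalIntegrable_const
  · exact Filter.Eventually.of_forall fun r _ => fun x _ => (hd r x).mul_const (k r)

lemma aux_param (g d : ℝ → ℝ → ℝ) (hgc : Continuous (Function.uncurry g))
    (hdc : Continuous (Function.uncurry d))
    (hd : ∀ r τ, HasDerivAt (fun τ => g r τ) (d r τ) τ)
    (k : ℝ → ℝ) (K : ℝ) (hkm : Measurable k) (hkb : ∀ r, |k r| ≤ K) (t : ℝ)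
    (hkc : ContinuousAt k t) :
    HasDerivAt (fun τ => ∫ r in (0:ℝ)..τ, g r τ * k r)
      (g t t * k t + ∫ r in (0:ℝ)..t, d r t * k r) t := by
  have hK0 : 0 ≤ K := le_trans (abs_nonneg _) (hkb 0)
  have hgr : ∀ τ, Continuous fun r => g r τ := fun τ =>
    hgc.comp (continuous_id.prodMk continuous_const)
  have hint : ∀ a c τ : ℝ, IntervalIntegrable (fun r => g r τ * k r) volume a c := by
    intro a c τ
    obtain ⟨C, hC⟩ := (isCompact_uIcc (a := a) (b := c)).exists_bound_of_continuousOn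
      (hgr τ).continuousOn
    have hC0 : 0 ≤ C := le_trans (norm_nonneg _) (hC a Set.left_mem_uIcc)
    refine aux_II_of_bound (C := C * K)
      ((hgr τ).aestronglyMeasurable.mul hkm.aestronglyMeasurable) fun x hx => ?_
    rw [abs_mul]
    exact mul_le_mul (by simpa using hC x (Set.uIoc_subset_uIcc hx)) (hkb x) (abs_nonneg _) hC0
  have hA : HasDerivAt (fun τ => ∫ r in (0:ℝ)..t, g r τ * k r)
      (∫ r in (0:ℝ)..t, d r t * k r) t :=
    aux_paramfix g d hgc hdc hd k K hkm t t fun r _ => hkb r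
  have hB : HasDerivAt (fun τ => ∫ r in t..τ, g r τ * k r) (g t t * k t) t := by
    rw [hasDerivAt_iff_isLittleO, Asymptotics.isLittleO_iff]
    intro c hc
    have hgtt : ContinuousAt (Function.uncurry g) (t, t) := hgc.continuousAt
    obtain ⟨δ₁, hδ₁pos, hδ₁⟩ := Metric.continuousAt_iff.1 hgtt (c / (2 * (K + 1)))
      (by positivity)
    obtain ⟨δ₂, hδ₂pos, hδ₂⟩ := Metric.continuousAt_iff.1 hkc (c / (2 * (|g t t| + 1)))
      (by positivity)
    filter_upwards [Metric.ball_mem_nhds t (lt_min hδ₁pos hδ₂pos)] with τ hτ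
    rw [Metric.mem_ball, Real.dist_eq] at hτ
    have hwork : (∫ r in t..τ, g r τ * k r) - (∫ r in t..t, g r t * k r)
        - (τ - t) • (g t t * k t) = ∫ r in t..τ, (g r τ * k r - g t t * k t) := by
      rw [intervalIntegral.integral_same, sub_zero, smul_eq_mul,
        intervalIntegral.integral_sub (hint t τ τ) intervalIntegrable_const,
        intervalIntegral.integral_const, smul_eq_mul]
    rw [hwork]
    have hbd : ∀ r ∈ Set.uIoc t τ, ‖g r τ * k r - g t t * k t‖ ≤ c := by
      intro r hr
      have hrt : |r - t| ≤ |τ - t| := by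
        rcases Set.mem_uIoc.1 hr with ⟨ha, hb⟩ | ⟨ha, hb⟩
        · rw [abs_of_nonneg (by linarith : (0:ℝ) ≤ r - t),
            abs_of_nonneg (by linarith : (0:ℝ) ≤ τ - t)]
          linarith
        · rw [abs_of_nonpos (by linarith : r - t ≤ 0),
            abs_of_nonpos (by linarith : τ - t ≤ 0)]
          linarith
      have h1 : |g r τ - g t t| < c / (2 * (K + 1)) := by
        have hd1 : dist (r, τ) (t, t) < δ₁ := by
          rw [Prod.dist_eq]
          apply max_lt <;> rw [Real.dist_eq]
          · exact lt_of_le_of_lt hrt (lt_of_lt_of_le hτ (min_le_left _ _))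
          · exact lt_of_lt_of_le hτ (min_le_left _ _)
        have := hδ₁ hd1
        rwa [Real.dist_eq] at this
      have h2 : |k r - k t| < c / (2 * (|g t t| + 1)) := by
        have : dist r t < δ₂ := by
          rw [Real.dist_eq]
          exact lt_of_le_of_lt hrt (lt_of_lt_of_le hτ (min_le_right _ _))
        have := hδ₂ this
        rwa [Real.dist_eq] at this
      have key : g r τ * k r - g t t * k t
          = (g r τ - g t t) * k r + g t t * (k r - k t) := by ring
      rw [Real.norm_eq_abs, key]
      calc |(g r τ - g t t) * k r + g t t * (k r - k t)|
          ≤ |(g r τ - g t t) * k r| + |g t t * (k r - k t)| := abs_add_le _ _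
        _ = |g r τ - g t t| * |k r| + |g t t| * |k r - k t| := by rw [abs_mul, abs_mul]
        _ ≤ c := by
            have b1 : |g r τ - g t t| * |k r| ≤ (c / (2 * (K + 1))) * K :=
              mul_le_mul h1.le (hkb r) (abs_nonneg _) (by positivity)
            have b2 : |g t t| * |k r - k t| ≤ |g t t| * (c / (2 * (|g t t| + 1))) :=
              mul_le_mul_of_nonneg_left h2.le (abs_nonneg _)
            have e1 : (c / (2 * (K + 1))) * K ≤ c / 2 := by
              rw [div_mul_eq_mul_div, div_le_div_iff₀ (by positivity) (by positivity)]
              nlinarith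
            have e2 : |g t t| * (c / (2 * (|g t t| + 1))) ≤ c / 2 := by
              rw [mul_div_assoc', div_le_div_iff₀ (by positivity) (by positivity)]
              nlinarith [abs_nonneg (g t t), hc.le]
            linarith
    have := intervalIntegral.norm_integral_le_of_norm_le_const hbd
    calc ‖∫ r in t..τ, (g r τ * k r - g t t * k t)‖ ≤ c * |τ - t| := this
      _ = c * ‖τ - t‖ := by rw [Real.norm_eq_abs]
  have hsum := hA.add hB
  have heq : (fun τ => (∫ r in (0:ℝ)..t, g r τ * k r) + ∫ r in t..τ, g r τ * k r)
      = fun τ => ∫ r in (0:ℝ)..τ, g r τ * k r := by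
    funext τ
    exact intervalIntegral.integral_add_adjacent_intervals (hint 0 t τ) (hint t τ τ)
  rw [show ((fun τ => ∫ r in (0:ℝ)..t, g r τ * k r) + fun τ => ∫ r in t..τ, g r τ * k r) = _ from heq] at hsum
  rw [add_comm]
  exact hsum

open MeasureTheory intervalIntegral Set Filter Topology

section
variable {T σ H : ℝ}

lemma aux_main (T σ H : ℝ) (hT : 0 < T) (hσ : 0 < σ) (hH1 : 1/2 < H) (hH2 : H < 1)
    (g : ℝ → ℝ → ℝ) (hgC : Continuous (Function.uncurry g))
    (hker : ∀ s t : ℝ, 0 ≤ s → s ≤ t → t ≤ T →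
      σ ^ 2 * g s t + H * (2 * H - 1) * ∫ r in (0 : ℝ)..t, g r t * |r - s| ^ (2 * H - 2) = σ)
    (d : ℝ → ℝ → ℝ)
    (hd : ∀ r τ, HasDerivAt (fun τ => g r τ) (d r τ) τ)
    (hdC : Continuous (Function.uncurry d))
    (t₁ : ℝ) (h0 : 0 < t₁) (hTlt : t₁ < T) :
    g t₁ t₁ + (∫ s in (0:ℝ)..t₁, d s t₁) = σ * g t₁ t₁ ^ 2 := by
  set p : ℝ := 2 * H - 2 with hp_def
  set c : ℝ := H * (2 * H - 1) with hc_def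
  have hp : -1 < p := by rw [hp_def]; linarith
  have hp0 : p < 0 := by rw [hp_def]; linarith
  have hq : 0 < p + 1 := by linarith
  have hcpos : 0 < c := by rw [hc_def]; nlinarith
  have hgr : ∀ τ, Continuous fun r => g r τ := fun τ =>
    hgC.comp (continuous_id.prodMk continuous_const)
  have hdr : ∀ τ, Continuous fun r => d r τ := fun τ =>
    hdC.comp (continuous_id.prodMk continuous_const)
  obtain ⟨Mg, hMg⟩ := (isCompact_Icc (a := (0:ℝ)) (b := T)).exists_bound_of_continuousOn
    (hgr t₁).continuousOn
  have hMg0 : 0 ≤ Mg := le_trans (norm_nonneg _) (hMg 0 ⟨le_rfl, hT.le⟩)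
  obtain ⟨Md, hMd⟩ := (isCompact_Icc (a := (0:ℝ)) (b := T)).exists_bound_of_continuousOn
    (hdr t₁).continuousOn
  have hMd0 : 0 ≤ Md := le_trans (norm_nonneg _) (hMd 0 ⟨le_rfl, hT.le⟩)
  set χ : ℝ → ℝ → ℝ := fun u r => c * ∫ s in (0:ℝ)..u, g s t₁ * |s - r| ^ p with hχdef
  -- measurability of χ u
  have hχmeas : ∀ u, 0 ≤ u → Measurable (χ u) := by
    intro u hu
    have heq : χ u = fun r => c * ∫ s in Set.Ioc (0:ℝ) u, g s t₁ * |s - r| ^ p := by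
      funext r
      rw [hχdef]
      simp only
      rw [intervalIntegral.integral_of_le hu]
    rw [heq]
    apply Measurable.const_mul
    have hm1 : Measurable fun z : ℝ × ℝ => g z.2 t₁ * |z.2 - z.1| ^ p :=
      ((hgr t₁).measurable.comp measurable_snd).mul (by fun_prop)
    exact hm1.stronglyMeasurable.integral_prod_right'.measurable
  -- global bound for χ u
  have hχbd : ∀ u, 0 ≤ u → u ≤ T → ∀ r, |χ u r| ≤ c * (Mg * (2 * (u - 0) ^ (p + 1) / (p + 1))) := by
    intro u hu huT r
    rw [hχdef]
    simp only
    rw [abs_mul, abs_of_pos hcpos]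
    apply mul_le_mul_of_nonneg_left _ hcpos.le
    apply aux_weighted_kernel_bound hp hp0 r hu hMg0 (hgr t₁).aestronglyMeasurable
    intro x hx
    simpa using hMg x ⟨hx.1, hx.2.trans huT⟩
  -- continuity of χ u at t₁ when u < t₁
  have hχcont : ∀ u, 0 ≤ u → u < t₁ → ContinuousAt (χ u) t₁ := by
    intro u hu hut
    have heq : χ u = fun r => c * ∫ s in Set.Ioc (0:ℝ) u, g s t₁ * |s - r| ^ p := by
      funext r
      rw [hχdef]
      simp only
      rw [intervalIntegral.integral_of_le hu]
    rw [heq]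
    apply ContinuousAt.mul continuousAt_const
    apply MeasureTheory.continuousAt_of_dominated
      (bound := fun _ => Mg * ((t₁ - u) / 2) ^ p)
    · refine Eventually.of_forall fun r => ?_
      exact (hgr t₁).aestronglyMeasurable.mul
        ((by fun_prop : Measurable fun s : ℝ => |s - r| ^ p).aestronglyMeasurable)
    · filter_upwards [Metric.ball_mem_nhds t₁ (by linarith : (0:ℝ) < (t₁ - u) / 2)] with r hr
      rw [Metric.mem_ball, Real.dist_eq] at hr
      refine (ae_restrict_iff' measurableSet_Ioc).2 (Eventually.of_forall fun s hs => ?_)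
      have h1 : t₁ - (t₁ - u) / 2 < r := by
        have := abs_sub_lt_iff.1 hr
        linarith [this.2]
      have hrs : (t₁ - u) / 2 ≤ |s - r| := by
        rw [abs_sub_comm, abs_of_nonneg (by linarith [hs.2] : (0:ℝ) ≤ r - s)]
        linarith [hs.2]
      have hk : ‖g s t₁ * |s - r| ^ p‖ = |g s t₁| * |s - r| ^ p := by
        rw [Real.norm_eq_abs, abs_mul, abs_of_nonneg (Real.rpow_nonneg (abs_nonneg _) _)]
      rw [hk]
      refine mul_le_mul ?_ ?_ (Real.rpow_nonneg (abs_nonneg _) _) hMg0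
      · simpa using hMg s ⟨hs.1.le, hs.2.trans (by linarith)⟩
      · exact Real.rpow_le_rpow_of_nonpos (by linarith) hrs hp0.le
    · exact integrableOn_const measure_Ioc_lt_top.ne
    · refine (ae_restrict_iff' measurableSet_Ioc).2 (Eventually.of_forall fun s hs => ?_)
      apply ContinuousAt.mul continuousAt_const
      have hne : |s - t₁| ≠ 0 := by
        rw [abs_ne_zero]
        exact sub_ne_zero.2 (by linarith [hs.2] : s ≠ t₁)
      exact ((continuous_const.sub continuous_id).abs.continuousAt).rpow_const (Or.inl hne)
  -- χ t₁ agrees with σ - σ²g on [0, t₁]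
  have hχt : ∀ r, 0 ≤ r → r ≤ t₁ → χ t₁ r = σ - σ ^ 2 * g r t₁ := by
    intro r h0r hrt
    have h := hker r t₁ h0r hrt hTlt.le
    rw [hχdef]
    simp only
    linarith
  -- the key relation for each u < t₁
  have hEu : ∀ u, 0 ≤ u → u < t₁ →
      σ ^ 2 * (∫ s in (0:ℝ)..u, d s t₁ * g s t₁)
        + (g t₁ t₁ * χ u t₁ + ∫ r in (0:ℝ)..t₁, d r t₁ * χ u r) = 0 := by
    intro u hu hut
    have huT : u ≤ T := by linarith
    have hder1 : HasDerivAt (fun τ => σ ^ 2 * ∫ s in (0:ℝ)..u, g s τ * g s t₁)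
        (σ ^ 2 * ∫ s in (0:ℝ)..u, d s t₁ * g s t₁) t₁ := by
      refine HasDerivAt.const_mul _ ?_
      apply aux_paramfix g d hgC hdC hd (fun s => g s t₁) Mg (hgr t₁).measurable u t₁
      intro r hr
      rw [Set.uIcc_of_le hu] at hr
      simpa using hMg r ⟨hr.1, hr.2.trans huT⟩
    have hder2 : HasDerivAt (fun τ => ∫ r in (0:ℝ)..τ, g r τ * χ u r)
        (g t₁ t₁ * χ u t₁ + ∫ r in (0:ℝ)..t₁, d r t₁ * χ u r) t₁ :=
      aux_param g d hgC hdC hd (χ u) (c * (Mg * (2 * (u - 0) ^ (p + 1) / (p + 1))))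
        (hχmeas u hu) (hχbd u hu huT) t₁ (hχcont u hu hut)
    have hder := hder1.add hder2
    have hconst : (fun τ => σ ^ 2 * (∫ s in (0:ℝ)..u, g s τ * g s t₁)
          + ∫ r in (0:ℝ)..τ, g r τ * χ u r)
        =ᶠ[𝓝 t₁] fun _ => σ * ∫ s in (0:ℝ)..u, g s t₁ := by
      filter_upwards [Ioo_mem_nhds hut hTlt] with τ hτ
      have hτ0 : 0 ≤ τ := le_trans hu hτ.1.le
      have e1 : (fun r => g r τ * χ u r)
          = fun r => c * (g r τ * ∫ s in (0:ℝ)..u, g s t₁ * |s - r| ^ p) := by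
        funext r
        rw [hχdef]
        simp only
        ring
      have e2 : ∫ r in (0:ℝ)..τ, g r τ * χ u r
          = c * ∫ r in (0:ℝ)..τ, g r τ * ∫ s in (0:ℝ)..u, g s t₁ * |s - r| ^ p := by
        rw [e1, intervalIntegral.integral_const_mul]
      have e3 : ∫ s in (0:ℝ)..u, g s t₁ * ∫ r in (0:ℝ)..τ, g r τ * |r - s| ^ p
          = ∫ r in (0:ℝ)..τ, g r τ * ∫ s in (0:ℝ)..u, g s t₁ * |s - r| ^ p :=
        aux_swap hp hp0 _ _ (hgr t₁) (hgr τ) u τ hu hτ0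
      have e4 : Set.EqOn (fun s => c * (g s t₁ * ∫ r in (0:ℝ)..τ, g r τ * |r - s| ^ p))
          (fun s => σ * g s t₁ - σ ^ 2 * (g s τ * g s t₁)) (Set.uIcc 0 u) := by
        intro s hs
        rw [Set.uIcc_of_le hu] at hs
        have h := hker s τ hs.1 (hs.2.trans hτ.1.le) hτ.2.le
        simp only
        linear_combination g s t₁ * h
      calc σ ^ 2 * (∫ s in (0:ℝ)..u, g s τ * g s t₁) + ∫ r in (0:ℝ)..τ, g r τ * χ u r
          = σ ^ 2 * (∫ s in (0:ℝ)..u, g s τ * g s t₁)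
            + ∫ s in (0:ℝ)..u, c * (g s t₁ * ∫ r in (0:ℝ)..τ, g r τ * |r - s| ^ p) := by
            rw [e2, ← e3]
            congr 1
            exact (intervalIntegral.integral_const_mul c _).symm
        _ = σ ^ 2 * (∫ s in (0:ℝ)..u, g s τ * g s t₁)
            + ∫ s in (0:ℝ)..u, (σ * g s t₁ - σ ^ 2 * (g s τ * g s t₁)) := by
            rw [intervalIntegral.integral_congr e4]
        _ = σ * ∫ s in (0:ℝ)..u, g s t₁ := by
            rw [intervalIntegral.integral_sub (f := fun s => σ * g s t₁) (g := fun s => σ ^ 2 * (g s τ * g s t₁)) ((continuous_const.mul (hgr t₁)).intervalIntegrable 0 u)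
              ((continuous_const.mul ((hgr τ).mul (hgr t₁))).intervalIntegrable 0 u),
              intervalIntegral.integral_const_mul, intervalIntegral.integral_const_mul]
            ring
    have hzero : HasDerivAt (fun τ => σ ^ 2 * (∫ s in (0:ℝ)..u, g s τ * g s t₁)
        + ∫ r in (0:ℝ)..τ, g r τ * χ u r) 0 t₁ :=
      (hasDerivAt_const t₁ _).congr_of_eventuallyEq hconst
    exact hder.unique hzero
  -- interval integrability of r ↦ d r t₁ * χ u r
  have hdχ_II : ∀ u, 0 ≤ u → u ≤ T → IntervalIntegrable (fun r => d r t₁ * χ u r) volume 0 t₁ := by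
    intro u hu huT
    refine aux_II_of_bound (C := Md * (c * (Mg * (2 * (u - 0) ^ (p + 1) / (p + 1)))))
      ((hdr t₁).aestronglyMeasurable.mul (hχmeas u hu).aestronglyMeasurable) fun x hx => ?_
    rw [Set.uIoc_of_le h0.le] at hx
    rw [abs_mul]
    refine mul_le_mul ?_ (hχbd u hu huT x) (abs_nonneg _) hMd0
    simpa using hMd x ⟨hx.1.le, hx.2.trans hTlt.le⟩
  -- uniform bound on χ u - χ t₁
  have hχdiff : ∀ u, 0 ≤ u → u ≤ t₁ → ∀ r,
      |χ u r - χ t₁ r| ≤ c * (Mg * (2 * (t₁ - u) ^ (p + 1) / (p + 1))) := by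
    intro u hu hut r
    have hb1 : ∀ x ∈ Set.uIoc (0:ℝ) u, |g x t₁| ≤ Mg := by
      intro x hx
      rw [Set.uIoc_of_le hu] at hx
      simpa using hMg x ⟨hx.1.le, hx.2.trans (hut.trans hTlt.le)⟩
    have hb2 : ∀ x ∈ Set.uIoc u t₁, |g x t₁| ≤ Mg := by
      intro x hx
      rw [Set.uIoc_of_le hut] at hx
      simpa using hMg x ⟨hu.trans hx.1.le, hx.2.trans hTlt.le⟩
    have hII1 : IntervalIntegrable (fun s => g s t₁ * |s - r| ^ p) volume 0 u :=
      aux_weighted_kernel_II hp r (hgr t₁).aestronglyMeasurable hb1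
    have hII2 : IntervalIntegrable (fun s => g s t₁ * |s - r| ^ p) volume u t₁ :=
      aux_weighted_kernel_II hp r (hgr t₁).aestronglyMeasurable hb2
    have hsplit := intervalIntegral.integral_add_adjacent_intervals hII1 hII2
    have hrepr : χ u r - χ t₁ r = -(c * ∫ s in u..t₁, g s t₁ * |s - r| ^ p) := by
      rw [hχdef]
      simp only
      rw [← hsplit]
      ring
    rw [hrepr, abs_neg, abs_mul, abs_of_pos hcpos]
    refine mul_le_mul_of_nonneg_left ?_ hcpos.le
    apply aux_weighted_kernel_bound hp hp0 r hut hMg0 (hgr t₁).aestronglyMeasurable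
    intro x hx
    simpa using hMg x ⟨hu.trans hx.1, hx.2.trans hTlt.le⟩
  -- the bound tends to zero from the left
  have hβ : Tendsto (fun u => c * (Mg * (2 * (t₁ - u) ^ (p + 1) / (p + 1)))) (𝓝[<] t₁) (𝓝 0) := by
    have h1 : Tendsto (fun u : ℝ => t₁ - u) (𝓝[<] t₁) (𝓝 0) := by
      have hcont : Continuous fun u : ℝ => t₁ - u := continuous_const.sub continuous_id
      have := (hcont.tendsto t₁).mono_left (nhdsWithin_le_nhds (s := Set.Iio t₁))
      simpa using this
    have h2 : Tendsto (fun u : ℝ => (t₁ - u) ^ (p + 1)) (𝓝[<] t₁) (𝓝 0) := by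
      have hc0 : ContinuousAt (fun x : ℝ => x ^ (p + 1)) 0 :=
        Real.continuousAt_rpow_const 0 (p + 1) (Or.inr hq.le)
      have := hc0.tendsto.comp h1
      simpa [Real.zero_rpow hq.ne', Function.comp_def] using this
    have h6 := (((h2.const_mul (2:ℝ)).div_const (p + 1)).const_mul Mg).const_mul c
    simpa using h6
  have hmemIoo : Set.Ioo (0:ℝ) t₁ ∈ 𝓝[<] t₁ := Ioo_mem_nhdsLT_of_mem ⟨h0, le_rfl⟩
  -- three convergence facts
  have hpart1 : Tendsto (fun u => σ ^ 2 * ∫ s in (0:ℝ)..u, d s t₁ * g s t₁) (𝓝[<] t₁)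
      (𝓝 (σ ^ 2 * ∫ s in (0:ℝ)..t₁, d s t₁ * g s t₁)) := by
    have hcont : Continuous fun u : ℝ => ∫ s in (0:ℝ)..u, d s t₁ * g s t₁ := by
      apply intervalIntegral.continuous_parametric_intervalIntegral_of_continuous (μ := volume)
        (f := fun _ s => d s t₁ * g s t₁) ?_ continuous_id
      exact (((hdr t₁).comp continuous_snd).mul ((hgr t₁).comp continuous_snd))
    exact ((hcont.tendsto t₁).mono_left nhdsWithin_le_nhds).const_mul _
  have hpart2 : Tendsto (fun u => g t₁ t₁ * χ u t₁) (𝓝[<] t₁)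
      (𝓝 (g t₁ t₁ * (σ - σ ^ 2 * g t₁ t₁))) := by
    have hdiff0 : Tendsto (fun u => χ u t₁ - χ t₁ t₁) (𝓝[<] t₁) (𝓝 0) := by
      apply squeeze_zero_norm' ?_ hβ
      filter_upwards [hmemIoo] with u hu
      rw [Real.norm_eq_abs]
      exact hχdiff u hu.1.le hu.2.le t₁
    have h2 : Tendsto (fun u => χ u t₁) (𝓝[<] t₁) (𝓝 (χ t₁ t₁)) := by
      have := hdiff0.add_const (χ t₁ t₁)
      simpa using this
    rw [← hχt t₁ h0.le le_rfl]
    exact h2.const_mul _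
  have hpart3 : Tendsto (fun u => ∫ r in (0:ℝ)..t₁, d r t₁ * χ u r) (𝓝[<] t₁)
      (𝓝 (∫ r in (0:ℝ)..t₁, d r t₁ * (σ - σ ^ 2 * g r t₁))) := by
    have htarg : ∫ r in (0:ℝ)..t₁, d r t₁ * (σ - σ ^ 2 * g r t₁)
        = ∫ r in (0:ℝ)..t₁, d r t₁ * χ t₁ r := by
      apply intervalIntegral.integral_congr
      intro x hx
      rw [Set.uIcc_of_le h0.le] at hx
      simp only
      rw [hχt x hx.1 hx.2]
    rw [htarg]
    have hdiff0 : Tendsto (fun u => (∫ r in (0:ℝ)..t₁, d r t₁ * χ u r)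
        - ∫ r in (0:ℝ)..t₁, d r t₁ * χ t₁ r) (𝓝[<] t₁) (𝓝 0) := by
      have hβ' : Tendsto (fun u => Md * (c * (Mg * (2 * (t₁ - u) ^ (p + 1) / (p + 1)))) * |t₁ - 0|)
          (𝓝[<] t₁) (𝓝 0) := by
        have := (hβ.const_mul Md).mul_const |t₁ - (0:ℝ)|
        simpa using this
      apply squeeze_zero_norm' ?_ hβ'
      filter_upwards [hmemIoo] with u hu
      rw [← intervalIntegral.integral_sub (hdχ_II u hu.1.le (by linarith [hu.2]))
        (hdχ_II t₁ h0.le hTlt.le)]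
      apply intervalIntegral.norm_integral_le_of_norm_le_const
      intro x hx
      rw [Set.uIoc_of_le h0.le] at hx
      have : d x t₁ * χ u x - d x t₁ * χ t₁ x = d x t₁ * (χ u x - χ t₁ x) := by ring
      rw [Real.norm_eq_abs, this, abs_mul]
      refine mul_le_mul ?_ (hχdiff u hu.1.le hu.2.le x) (abs_nonneg _) hMd0
      simpa using hMd x ⟨hx.1.le, hx.2.trans hTlt.le⟩
    have := hdiff0.add_const (∫ r in (0:ℝ)..t₁, d r t₁ * χ t₁ r)
    simpa using this
  have hL := hpart1.add (hpart2.add hpart3)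
  have hL0 : Tendsto (fun u => σ ^ 2 * (∫ s in (0:ℝ)..u, d s t₁ * g s t₁)
      + (g t₁ t₁ * χ u t₁ + ∫ r in (0:ℝ)..t₁, d r t₁ * χ u r)) (𝓝[<] t₁) (𝓝 0) := by
    apply Tendsto.congr' _ tendsto_const_nhds
    filter_upwards [hmemIoo] with u hu
    exact (hEu u hu.1.le hu.2).symm
  have hElim := tendsto_nhds_unique hL hL0
  have hexp : ∫ r in (0:ℝ)..t₁, d r t₁ * (σ - σ ^ 2 * g r t₁)
      = σ * (∫ r in (0:ℝ)..t₁, d r t₁) - σ ^ 2 * ∫ r in (0:ℝ)..t₁, d r t₁ * g r t₁ := by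
    have e : (fun r => d r t₁ * (σ - σ ^ 2 * g r t₁))
        = fun r => σ * d r t₁ - σ ^ 2 * (d r t₁ * g r t₁) := by
      funext r
      ring
    rw [e, intervalIntegral.integral_sub (f := fun r => σ * d r t₁) (g := fun r => σ ^ 2 * (d r t₁ * g r t₁))
      ((continuous_const.mul (hdr t₁)).intervalIntegrable 0 t₁)
      ((continuous_const.mul ((hdr t₁).mul (hgr t₁))).intervalIntegrable 0 t₁),
      intervalIntegral.integral_const_mul, intervalIntegral.integral_const_mul]
  rw [hexp] at hElim
  have hmul : σ * (g t₁ t₁ + ∫ s in (0:ℝ)..t₁, d s t₁) = σ * (σ * g t₁ t₁ ^ 2) := by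
    linear_combination hElim
  exact mul_left_cancel₀ hσ.ne' hmul
end

theorem stmt_7 (T σ H : ℝ) (hT : 0 < T) (hσ : 0 < σ) (hH1 : 1/2 < H) (hH2 : H < 1)
    (g : ℝ → ℝ → ℝ) (hg : ContDiff ℝ 1 (Function.uncurry g))
    (hker : ∀ s t : ℝ, 0 ≤ s → s ≤ t → t ≤ T →
      σ ^ 2 * g s t + H * (2 * H - 1) * ∫ r in (0 : ℝ)..t, g r t * |r - s| ^ (2 * H - 2) = σ) :
    ∀ t ∈ Set.Icc (0 : ℝ) T,
      HasDerivAt (fun τ => ∫ s in (0 : ℝ)..τ, g s τ) (σ * (g t t) ^ 2) t := by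
  intro t ht
  obtain ⟨ht0, htT⟩ := ht
  have hgC : Continuous (Function.uncurry g) := hg.continuous
  set d : ℝ → ℝ → ℝ := fun r τ => (fderiv ℝ (Function.uncurry g) (r, τ)) (0, 1) with hd_def
  have hd : ∀ r τ, HasDerivAt (fun τ => g r τ) (d r τ) τ := by
    intro r τ
    have h1 : HasFDerivAt (Function.uncurry g) (fderiv ℝ (Function.uncurry g) (r, τ)) (r, τ) :=
      ((hg.differentiable one_ne_zero) (r, τ)).hasFDerivAt
    have h2 : HasDerivAt (fun τ : ℝ => ((r : ℝ), τ)) (((0 : ℝ), (1 : ℝ))) τ :=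
      (hasDerivAt_const τ r).prodMk (hasDerivAt_id τ)
    exact h1.comp_hasDerivAt τ h2
  have hdC : Continuous (Function.uncurry d) := by
    have h1 : Continuous fun x : ℝ × ℝ => fderiv ℝ (Function.uncurry g) x :=
      hg.continuous_fderiv one_ne_zero
    exact h1.clm_apply continuous_const
  have hstepA : HasDerivAt (fun τ => ∫ s in (0:ℝ)..τ, g s τ)
      (g t t + ∫ s in (0:ℝ)..t, d s t) t := by
    have h := aux_param g d hgC hdC hd (fun _ => 1) 1 measurable_const
      (fun r => by norm_num) t continuousAt_const
    simp only [mul_one] at h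
    exact h
  have hkey : g t t + (∫ s in (0:ℝ)..t, d s t) = σ * g t t ^ 2 := by
    rcases eq_or_lt_of_le ht0 with h0 | h0
    · subst h0
      rw [intervalIntegral.integral_same]
      have h := hker 0 0 le_rfl le_rfl hT.le
      rw [intervalIntegral.integral_same, mul_zero, add_zero] at h
      have h1 : σ * g 0 0 = 1 := by
        have h2 : σ * (σ * g 0 0) = σ * 1 := by
          ring_nf
          ring_nf at h
          linarith
        exact mul_left_cancel₀ hσ.ne' h2
      linear_combination (-(g 0 0)) * h1
    rcases eq_or_lt_of_le htT with hTeq | hTlt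
    · have hIcont : Continuous fun τ : ℝ => ∫ s in (0:ℝ)..τ, d s τ := by
        apply intervalIntegral.continuous_parametric_intervalIntegral_of_continuous (μ := volume)
          (f := fun τ s => d s τ) ?_ continuous_id
        exact hdC.comp (continuous_snd.prodMk continuous_fst)
      have hgdiag : Continuous fun τ : ℝ => g τ τ := hgC.comp (continuous_id.prodMk continuous_id)
      have hfun : Continuous fun τ : ℝ => g τ τ + (∫ s in (0:ℝ)..τ, d s τ) - σ * g τ τ ^ 2 :=
        (hgdiag.add hIcont).sub (continuous_const.mul (hgdiag.pow 2))
      have hlim1 : Tendsto (fun τ : ℝ => g τ τ + (∫ s in (0:ℝ)..τ, d s τ) - σ * g τ τ ^ 2)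
          (𝓝[<] t) (𝓝 (g t t + (∫ s in (0:ℝ)..t, d s t) - σ * g t t ^ 2)) :=
        (hfun.tendsto t).mono_left nhdsWithin_le_nhds
      have hlim2 : Tendsto (fun τ : ℝ => g τ τ + (∫ s in (0:ℝ)..τ, d s τ) - σ * g τ τ ^ 2)
          (𝓝[<] t) (𝓝 0) := by
        apply Tendsto.congr' _ tendsto_const_nhds
        filter_upwards [Ioo_mem_nhdsLT_of_mem (⟨h0, le_rfl⟩ : t ∈ Set.Ioc 0 t)] with τ hτ
        have hmain := aux_main T σ H hT hσ hH1 hH2 g hgC hker d hd hdC τ hτ.1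
          (lt_of_lt_of_le hτ.2 htT)
        exact (sub_eq_zero.2 hmain).symm
      have hz := tendsto_nhds_unique hlim1 hlim2
      linarith [hz]
    · exact aux_main T σ H hT hσ hH1 hH2 g hgC hker d hd hdC t h0 hTlt
  rw [← hkey]
  exact hstepA
end

section
/- For H' ∈ (0,1), a > 0, n ∈ ℕ with n ≥ 1, and v > 0, define L_n(u,H',a) = ∫₀^∞ exp(−(1/2)(u t^{−H'/(n−H')} − a t^{(1−H')/(n−H')})²) dt. Then as u → ∞, L_n(u,H',a) ~ √(2π)(n−H') a^{−n} u^{n−1}, i.e., L_n(u,H',a)/(√(2π)(n−H')a^{−n}u^{n−1}) → 1. -/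
open MeasureTheory Filter

open Real Set Asymptotics Topology

lemma aux_translate (g : ℝ → ℝ) (c d : ℝ) :
    ∫ x in Set.Ioi c, g (x + d) = ∫ x in Set.Ioi (c + d), g x := by
  have A : MeasurePreserving (fun x : ℝ => x + d) volume volume :=
    measurePreserving_add_right volume d
  have B : MeasurableEmbedding (fun x : ℝ => x + d) :=
    (Homeomorph.addRight d).measurableEmbedding
  have h := A.setIntegral_preimage_emb B g (Set.Ioi (c + d))
  have hpre : (fun x : ℝ => x + d) ⁻¹' Set.Ioi (c + d) = Set.Ioi c := by
    ext x; simp [Set.mem_Ioi]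
  rw [hpre] at h
  exact h

lemma aux_change (H' a : ℝ) (hH'0 : 0 < H') (hH'1 : H' < 1) (ha : 0 < a)
    (n : ℕ) (hn : 1 ≤ n) {u : ℝ} (hu : 0 < u) :
    (∫ t in Set.Ioi (0:ℝ), Real.exp (-(1 / 2) * (u * t ^ (-H' / ((n : ℝ) - H'))
        - a * t ^ ((1 - H') / ((n : ℝ) - H'))) ^ 2))
      = ((n:ℝ) - H') * a ^ (-(n:ℝ)) * u ^ ((n:ℝ) - 1) *
        ∫ x in Set.Ioi (-(1 / (a ^ (-H') * u ^ (H' - 1)))),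
          (1 + (a ^ (-H') * u ^ (H' - 1)) * x) ^ ((n:ℝ) - H' - 1) *
            Real.exp (-(1/2) * ((1 + (a ^ (-H') * u ^ (H' - 1)) * x) ^ (-H') * x) ^ 2) := by
  have hn1 : (1:ℝ) ≤ (n:ℝ) := by exact_mod_cast hn
  set β : ℝ := (n:ℝ) - H' with hβdef
  have hβ : 0 < β := by simp only [hβdef]; linarith
  set ε : ℝ := a ^ (-H') * u ^ (H' - 1) with hεdef
  have hε : 0 < ε := by
    have := Real.rpow_pos_of_pos ha (-H')
    have := Real.rpow_pos_of_pos hu (H' - 1)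
    positivity
  set m : ℝ := u / a with hmdef
  have hm : 0 < m := by positivity
  set G : ℝ → ℝ := fun s => β * s ^ (β - 1) *
    Real.exp (-(1/2) * (s ^ (-H') * (u - a * s)) ^ 2) with hGdef
  -- step 1: t = s ^ β
  have step1 : (∫ t in Set.Ioi (0:ℝ), Real.exp (-(1 / 2) * (u * t ^ (-H' / β)
        - a * t ^ ((1 - H') / β)) ^ 2)) = ∫ s in Set.Ioi (0:ℝ), G s := by
    rw [← integral_comp_rpow_Ioi_of_pos (g := fun t => Real.exp (-(1 / 2) * (u * t ^ (-H' / β)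
        - a * t ^ ((1 - H') / β)) ^ 2)) hβ]
    refine setIntegral_congr_fun measurableSet_Ioi (fun s hs => ?_)
    have hs0 : (0:ℝ) < s := hs
    have e1 : (s ^ β) ^ (-H' / β) = s ^ (-H') := by
      rw [← Real.rpow_mul hs0.le]
      congr 1
      field_simp
    have e2 : (s ^ β) ^ ((1 - H') / β) = s ^ (1 - H') := by
      rw [← Real.rpow_mul hs0.le]
      congr 1
      field_simp
    have e3 : s ^ (1 - H') = s ^ (-H') * s := by
      rw [show (1 - H') = -H' + 1 by ring, Real.rpow_add hs0, Real.rpow_one]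
    simp only [smul_eq_mul, e1, e2, e3, hGdef]
    ring_nf
  -- step 2: affine substitution s = m * ε * x + m
  have hmε : 0 < m * ε := by positivity
  have step2 : ∫ s in Set.Ioi (0:ℝ), G s
      = (m * ε) * ∫ x in Set.Ioi (-(1/ε)), G (m * ε * x + m) := by
    have t1 : (∫ x in Set.Ioi (-(1/ε)), (fun y => G (y + m)) ((m * ε) * x))
        = (m * ε)⁻¹ • ∫ y in Set.Ioi ((m * ε) * (-(1/ε))), (fun y => G (y + m)) y :=
      integral_comp_mul_left_Ioi (fun y => G (y + m)) (-(1/ε)) hmε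
    have t0 : (m * ε) * (-(1/ε)) = -m := by field_simp
    rw [t0] at t1
    have t2 : ∫ y in Set.Ioi (-m), G (y + m) = ∫ s in Set.Ioi ((-m) + m), G s :=
      aux_translate G (-m) m
    simp only [neg_add_cancel] at t2
    simp only [t2] at t1
    rw [smul_eq_mul] at t1
    have : (m * ε) * ∫ x in Set.Ioi (-(1/ε)), G (m * ε * x + m)
        = (m * ε) * ((m * ε)⁻¹ * ∫ s in Set.Ioi (0:ℝ), G s) := by
      rw [← t1]
    rw [this, ← mul_assoc, mul_inv_cancel₀ hmε.ne', one_mul]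
  -- step 3: pointwise identification on the new domain
  have step3 : ∫ x in Set.Ioi (-(1/ε)), G (m * ε * x + m)
      = ∫ x in Set.Ioi (-(1/ε)), (β * m ^ (β - 1)) *
          ((1 + ε * x) ^ (β - 1) * Real.exp (-(1/2) * ((1 + ε * x) ^ (-H') * x) ^ 2)) := by
    refine setIntegral_congr_fun measurableSet_Ioi (fun x hx => ?_)
    have hx' : -(1/ε) < x := hx
    have hv : 0 < 1 + ε * x := by
      have h1 : ε * (-(1/ε)) < ε * x := mul_lt_mul_of_pos_left hx' hε
      have h2 : ε * (-(1/ε)) = -1 := by field_simp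
      rw [h2] at h1
      linarith
    have hsv : m * ε * x + m = m * (1 + ε * x) := by ring
    have hrw1 : (m * (1 + ε * x)) ^ (β - 1) = m ^ (β - 1) * (1 + ε * x) ^ (β - 1) :=
      Real.mul_rpow hm.le hv.le
    have hrw2 : (m * (1 + ε * x)) ^ (-H') = m ^ (-H') * (1 + ε * x) ^ (-H') :=
      Real.mul_rpow hm.le hv.le
    have hua : u - a * (m * (1 + ε * x)) = -(u * ε * x) := by
      have : a * m = u := by rw [hmdef]; field_simp
      rw [show a * (m * (1 + ε * x)) = (a * m) * (1 + ε * x) by ring, this]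
      ring
    have hkey : m ^ (-H') * u * ε = 1 := by
      have h1 : m ^ (-H') = u ^ (-H') * a ^ H' := by
        rw [hmdef, Real.div_rpow hu.le ha.le, Real.rpow_neg hu.le, Real.rpow_neg ha.le,
          div_eq_mul_inv, inv_inv]
      rw [h1, hεdef]
      have h2 : u ^ (-H') * u ^ (H' - 1) * u = 1 := by
        have huu : u ^ (-H') * u ^ (H' - 1) = u ^ (-1 : ℝ) := by
          rw [← Real.rpow_add hu]; congr 1; ring
        rw [huu, Real.rpow_neg_one]
        exact inv_mul_cancel₀ hu.ne'
      have h3 : a ^ H' * a ^ (-H') = 1 := by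
        rw [← Real.rpow_add ha]; norm_num
      calc u ^ (-H') * a ^ H' * u * (a ^ (-H') * u ^ (H' - 1))
          = (u ^ (-H') * u ^ (H' - 1) * u) * (a ^ H' * a ^ (-H')) := by ring
        _ = 1 := by rw [h2, h3, one_mul]
    have hsq : ((m * (1 + ε * x)) ^ (-H') * (u - a * (m * (1 + ε * x)))) ^ 2
        = ((1 + ε * x) ^ (-H') * x) ^ 2 := by
      rw [hua, hrw2]
      have : m ^ (-H') * (1 + ε * x) ^ (-H') * -(u * ε * x)
          = -((m ^ (-H') * u * ε) * ((1 + ε * x) ^ (-H') * x)) := by ring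
      rw [this, hkey, one_mul, neg_sq]
    simp only [hGdef, hsv, hrw1, hsq]
    ring
  -- assemble
  rw [step1, step2, step3, integral_const_mul]
  have hconst : (m * ε) * (β * m ^ (β - 1)) = β * (a ^ (-(n:ℝ)) * u ^ ((n:ℝ) - 1)) := by
    have hmpow : m * m ^ (β - 1) = m ^ β := by
      nth_rewrite 1 [show m = m ^ (1:ℝ) from (Real.rpow_one m).symm]
      rw [← Real.rpow_add hm]
      norm_num
    have hmb : m ^ β = u ^ β * a ^ (-β) := by
      rw [hmdef, Real.div_rpow hu.le ha.le, Real.rpow_neg ha.le, div_eq_mul_inv]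
    have hup : u ^ β * u ^ (H' - 1) = u ^ ((n:ℝ) - 1) := by
      rw [← Real.rpow_add hu]
      congr 1
      rw [hβdef]; ring
    have hap : a ^ (-β) * a ^ (-H') = a ^ (-(n:ℝ)) := by
      rw [← Real.rpow_add ha]
      congr 1
      rw [hβdef]; ring
    calc (m * ε) * (β * m ^ (β - 1)) = β * ((m * m ^ (β - 1)) * ε) := by ring
      _ = β * (m ^ β * ε) := by rw [hmpow]
      _ = β * ((u ^ β * u ^ (H' - 1)) * (a ^ (-β) * a ^ (-H'))) := by
          rw [hmb, hεdef]; ring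
      _ = β * (u ^ ((n:ℝ) - 1) * a ^ (-(n:ℝ))) := by rw [hup, hap]
      _ = β * (a ^ (-(n:ℝ)) * u ^ ((n:ℝ) - 1)) := by ring
  rw [← mul_assoc, hconst]
  ring

lemma aux_pow_le_exp (m : ℕ) {t : ℝ} (ht : 0 ≤ t) :
    t ^ m ≤ (m.factorial : ℝ) * Real.exp t := by
  have h := Real.sum_le_exp_of_nonneg ht (m + 1)
  have h2 : t ^ m / (m.factorial : ℝ) ≤ ∑ i ∈ Finset.range (m + 1), t ^ i / (i.factorial : ℝ) := by
    refine Finset.single_le_sum (f := fun i => t ^ i / (i.factorial : ℝ)) ?_ ?_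
    · intro i _; positivity
    · simp
  have hfac : (0:ℝ) < (m.factorial : ℝ) := by positivity
  calc t ^ m = (t ^ m / (m.factorial : ℝ)) * (m.factorial : ℝ) := by field_simp
    _ ≤ Real.exp t * (m.factorial : ℝ) := mul_le_mul_of_nonneg_right (h2.trans h) hfac.le
    _ = (m.factorial : ℝ) * Real.exp t := by ring

set_option maxHeartbeats 800000 in
lemma aux_small (H' : ℝ) (hH'0 : 0 < H') : ∃ D : ℝ, 0 < D ∧ ∀ v : ℝ, 0 < v → v ≤ 1 →
    v⁻¹ * Real.exp (-((1/16) * v ^ (-(2*H')))) ≤ D := by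
  obtain ⟨m₀, hm₀⟩ : ∃ m₀ : ℕ, 1 ≤ 2 * H' * (m₀ : ℝ) := by
    refine ⟨⌈1/(2*H')⌉₊, ?_⟩
    have h1 : (1/(2*H') : ℝ) ≤ (⌈1/(2*H')⌉₊ : ℝ) := Nat.le_ceil _
    have h2 : (0:ℝ) < 2 * H' := by linarith
    calc (1:ℝ) = (2*H') * (1/(2*H')) := by field_simp
      _ ≤ (2*H') * (⌈1/(2*H')⌉₊ : ℝ) := by exact mul_le_mul_of_nonneg_left h1 h2.le
      _ = 2 * H' * (⌈1/(2*H')⌉₊ : ℝ) := by ring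
  refine ⟨(m₀.factorial : ℝ) * 16 ^ m₀, by positivity, fun v hv hv1 => ?_⟩
  set t : ℝ := (1/16) * v ^ (-(2*H')) with htdef
  have hvr : (0:ℝ) < v ^ (-(2*H')) := Real.rpow_pos_of_pos hv _
  have ht : 0 < t := by rw [htdef]; positivity
  have hexp_inv : Real.exp (-t) ≤ (m₀.factorial : ℝ) / t ^ m₀ := by
    have h1 := aux_pow_le_exp m₀ ht.le
    have h3 : 0 < t ^ m₀ := pow_pos ht m₀
    rw [Real.exp_neg, le_div_iff₀ h3]
    calc (Real.exp t)⁻¹ * t ^ m₀ ≤ (Real.exp t)⁻¹ * ((m₀.factorial : ℝ) * Real.exp t) :=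
          mul_le_mul_of_nonneg_left h1 (by positivity)
      _ = (m₀.factorial : ℝ) := by
          field_simp
  have htpow : t ^ m₀ = (1/16) ^ m₀ * v ^ (-(2*H') * (m₀:ℝ)) := by
    rw [htdef, mul_pow]
    congr 1
    rw [← Real.rpow_natCast (v ^ (-(2*H'))) m₀, ← Real.rpow_mul hv.le]
  have hstep : v⁻¹ * ((m₀.factorial : ℝ) / t ^ m₀)
      = (m₀.factorial : ℝ) * 16 ^ m₀ * (v⁻¹ * v ^ (2*H' * (m₀:ℝ))) := by
    rw [htpow]
    have h1 : v ^ (-(2*H') * (m₀:ℝ)) = (v ^ (2*H' * (m₀:ℝ)))⁻¹ := by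
      rw [← Real.rpow_neg hv.le]
      congr 1
      ring
    rw [h1]
    have h2 : (0:ℝ) < v ^ (2*H' * (m₀:ℝ)) := Real.rpow_pos_of_pos hv _
    field_simp
    rw [← mul_pow]; norm_num
  have hlast : v⁻¹ * v ^ (2*H' * (m₀:ℝ)) ≤ 1 := by
    rw [← Real.rpow_neg_one v, ← Real.rpow_add hv]
    apply Real.rpow_le_one hv.le hv1
    linarith
  calc v⁻¹ * Real.exp (-t) ≤ v⁻¹ * ((m₀.factorial : ℝ) / t ^ m₀) := by
        apply mul_le_mul_of_nonneg_left hexp_inv (by positivity)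
    _ = (m₀.factorial : ℝ) * 16 ^ m₀ * (v⁻¹ * v ^ (2*H' * (m₀:ℝ))) := hstep
    _ ≤ (m₀.factorial : ℝ) * 16 ^ m₀ * 1 := by
        apply mul_le_mul_of_nonneg_left hlast (by positivity)
    _ = (m₀.factorial : ℝ) * 16 ^ m₀ := mul_one _

set_option maxHeartbeats 1600000 in
lemma aux_bound (H' : ℝ) (hH'0 : 0 < H') (hH'1 : H' < 1) (n : ℕ) (hn : 1 ≤ n) :
    ∃ C : ℝ, 0 < C ∧ ∀ ε : ℝ, 0 < ε → ε ≤ 1 → ∀ x : ℝ, -(1/ε) < x →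
      (1 + ε * x) ^ ((n:ℝ) - H' - 1) * Real.exp (-(1/2) * ((1 + ε * x) ^ (-H') * x) ^ 2)
        ≤ C * Real.exp (-(1/4) * x ^ 2)
          + (1 + |x|) ^ n * Real.exp (-(1/8) * |x| ^ (2 - 2*H')) := by
  obtain ⟨D, hD, hDprop⟩ := aux_small H' hH'0
  refine ⟨2^n * Real.exp 1 + 2 + D, by positivity, fun ε hε hε1 x hx => ?_⟩
  set C : ℝ := 2^n * Real.exp 1 + 2 + D with hCdef
  set v : ℝ := 1 + ε * x with hvdef
  have hv : 0 < v := by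
    have h1 : ε * (-(1/ε)) < ε * x := mul_lt_mul_of_pos_left hx hε
    have h2 : ε * (-(1/ε)) = -1 := by field_simp
    rw [h2] at h1
    simp only [hvdef]
    linarith
  have hsq : (v ^ (-H') * x) ^ 2 = v ^ (-(2*H')) * x ^ 2 := by
    rw [mul_pow]
    congr 1
    rw [← Real.rpow_natCast (v ^ (-H')) 2, ← Real.rpow_mul hv.le]
    congr 1
    push_cast
    ring
  rw [hsq]
  have hx2 : (0:ℝ) ≤ x ^ 2 := sq_nonneg x
  rcases le_or_gt 0 x with hx0 | hx0
  · -- x ≥ 0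
    have hv1 : 1 ≤ v := by
      simp only [hvdef]; nlinarith
    have hvle : v ≤ 1 + x := by
      simp only [hvdef]; nlinarith
    have hA1 : v ^ ((n:ℝ) - H' - 1) ≤ (1 + x) ^ n := by
      calc v ^ ((n:ℝ) - H' - 1) ≤ v ^ ((n:ℝ)) :=
            Real.rpow_le_rpow_of_exponent_le hv1 (by linarith)
        _ = v ^ n := Real.rpow_natCast v n
        _ ≤ (1 + x) ^ n := pow_le_pow_left₀ (by linarith) hvle n
    have hA2 : (1 + x) ^ (-(2*H')) ≤ v ^ (-(2*H')) := by
      rw [Real.rpow_neg hv.le, Real.rpow_neg (by linarith : (0:ℝ) ≤ 1 + x)]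
      have h1 : v ^ (2*H') ≤ (1 + x) ^ (2*H') :=
        Real.rpow_le_rpow hv.le hvle (by linarith)
      have h2 : 0 < v ^ (2*H') := Real.rpow_pos_of_pos hv _
      exact inv_anti₀ h2 h1
    have hexpA : Real.exp (-(1/2) * (v ^ (-(2*H')) * x ^ 2))
        ≤ Real.exp (-(1/2) * ((1 + x) ^ (-(2*H')) * x ^ 2)) := by
      apply Real.exp_le_exp.mpr
      nlinarith [mul_le_mul_of_nonneg_right hA2 hx2]
    rcases le_or_gt x 1 with hx1 | hx1
    · -- 0 ≤ x ≤ 1 : use the Gaussian term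
      have hb1 : v ^ ((n:ℝ) - H' - 1) * Real.exp (-(1/2) * (v ^ (-(2*H')) * x ^ 2))
          ≤ (2:ℝ) ^ n := by
        have he : Real.exp (-(1/2) * (v ^ (-(2*H')) * x ^ 2)) ≤ 1 := by
          apply Real.exp_le_one_iff.mpr
          have : 0 ≤ v ^ (-(2*H')) * x ^ 2 := by positivity
          nlinarith
        have hp : (1 + x) ^ n ≤ (2:ℝ) ^ n := pow_le_pow_left₀ (by linarith) (by linarith) n
        calc v ^ ((n:ℝ) - H' - 1) * Real.exp (-(1/2) * (v ^ (-(2*H')) * x ^ 2))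
            ≤ (1 + x) ^ n * 1 :=
              mul_le_mul hA1 he (Real.exp_nonneg _) (by positivity)
          _ = (1 + x) ^ n := mul_one _
          _ ≤ (2:ℝ) ^ n := hp
      have hb2 : (2:ℝ) ^ n ≤ C * Real.exp (-(1/4) * x ^ 2) := by
        have h1 : Real.exp (-(1/4)) ≤ Real.exp (-(1/4) * x ^ 2) := by
          apply Real.exp_le_exp.mpr
          nlinarith
        have h2 : Real.exp 1 * Real.exp (-(1/4)) = Real.exp (3/4) := by
          rw [← Real.exp_add]; norm_num
        have h3 : (1:ℝ) ≤ Real.exp (3/4) := by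
          have := Real.add_one_le_exp (3/4 : ℝ)
          linarith
        have hpow : (0:ℝ) < 2 ^ n := pow_pos (by norm_num) n
        have h4 : (2:ℝ) ^ n ≤ 2 ^ n * Real.exp 1 * Real.exp (-(1/4)) := by
          rw [mul_assoc, h2]
          nlinarith
        have h5 : (2:ℝ) ^ n * Real.exp 1 * Real.exp (-(1/4)) ≤
            (2 ^ n * Real.exp 1) * Real.exp (-(1/4) * x ^ 2) :=
          mul_le_mul_of_nonneg_left h1 (by positivity)
        have h6 : (2 ^ n * Real.exp 1) * Real.exp (-(1/4) * x ^ 2)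
            ≤ C * Real.exp (-(1/4) * x ^ 2) := by
          apply mul_le_mul_of_nonneg_right _ (Real.exp_nonneg _)
          rw [hCdef]
          linarith
        linarith
      have hpos : 0 ≤ (1 + |x|) ^ n * Real.exp (-(1/8) * |x| ^ (2 - 2*H')) := by positivity
      linarith
    · -- x > 1 : use the tail term
      have hxpos : (0:ℝ) < x := by linarith
      have habs : |x| = x := abs_of_pos hxpos
      have hkey : (1/8) * x ^ (2 - 2*H') ≤ (1/2) * ((1 + x) ^ (-(2*H')) * x ^ 2) := by
        have hxp : (0:ℝ) < x ^ (2*H') := Real.rpow_pos_of_pos hxpos _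
        have h1x : (0:ℝ) < (1+x) ^ (2*H') := Real.rpow_pos_of_pos (by linarith) _
        have h2x : (1 + x) ^ (2*H') ≤ 4 * x ^ (2*H') := by
          have e1 : (1 + x) ^ (2*H') ≤ (2*x) ^ (2*H') :=
            Real.rpow_le_rpow (by linarith) (by linarith) (by linarith)
          have e2 : (2*x) ^ (2*H') = 2 ^ (2*H') * x ^ (2*H') :=
            Real.mul_rpow (by norm_num) hxpos.le
          have e3 : (2:ℝ) ^ (2*H') ≤ 2 ^ (2:ℝ) :=
            Real.rpow_le_rpow_of_exponent_le (by norm_num) (by linarith)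
          have e4 : (2:ℝ) ^ (2:ℝ) = 4 := by
            rw [show (2:ℝ) = ((2:ℕ):ℝ) by norm_num, Real.rpow_natCast]
            norm_num
          nlinarith
        have hinv : (4 * x ^ (2*H'))⁻¹ ≤ ((1 + x) ^ (2*H'))⁻¹ :=
          inv_anti₀ h1x h2x
        have hrs : x ^ (2 - 2*H') = x ^ (2:ℝ) / x ^ (2*H') := by
          rw [← Real.rpow_sub hxpos]
        have hx2r : x ^ (2:ℝ) = x ^ 2 := by
          rw [show (2:ℝ) = ((2:ℕ):ℝ) by norm_num, Real.rpow_natCast]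
        rw [Real.rpow_neg (by linarith : (0:ℝ) ≤ 1+x), hrs, hx2r]
        calc (1/8) * (x^2 / x ^ (2*H')) = (x^2) * (4 * x ^ (2*H'))⁻¹ / 2 := by
              field_simp
              ring
          _ ≤ (x^2) * ((1 + x) ^ (2*H'))⁻¹ / 2 := by
              apply div_le_div_of_nonneg_right _ (by norm_num)
              exact mul_le_mul_of_nonneg_left hinv hx2
          _ = (1/2) * (((1+x) ^ (2*H'))⁻¹ * x^2) := by ring
      have hexp2 : Real.exp (-(1/2) * ((1 + x) ^ (-(2*H')) * x ^ 2))
          ≤ Real.exp (-(1/8) * x ^ (2 - 2*H')) := by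
        apply Real.exp_le_exp.mpr
        nlinarith
      have hfinal : v ^ ((n:ℝ) - H' - 1) * Real.exp (-(1/2) * (v ^ (-(2*H')) * x ^ 2))
          ≤ (1 + x) ^ n * Real.exp (-(1/8) * x ^ (2 - 2*H')) :=
        mul_le_mul hA1 (hexpA.trans hexp2) (Real.exp_nonneg _) (by positivity)
      have hg : 0 ≤ C * Real.exp (-(1/4) * x ^ 2) := by positivity
      rw [habs]
      linarith
  · -- x < 0
    have hv1 : v ≤ 1 := by
      simp only [hvdef]; nlinarith
    have h2H : 1 ≤ v ^ (-(2*H')) :=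
      Real.one_le_rpow_of_pos_of_le_one_of_nonpos hv hv1 (by linarith)
    have hvr : (0:ℝ) < v ^ (-(2*H')) := Real.rpow_pos_of_pos hv _
    have hsplit : Real.exp (-(1/2) * (v ^ (-(2*H')) * x ^ 2))
        = Real.exp (-(1/4) * (v ^ (-(2*H')) * x ^ 2))
          * Real.exp (-(1/4) * (v ^ (-(2*H')) * x ^ 2)) := by
      rw [← Real.exp_add]
      congr 1
      ring
    have hexpx : Real.exp (-(1/4) * (v ^ (-(2*H')) * x ^ 2)) ≤ Real.exp (-(1/4) * x ^ 2) := by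
      apply Real.exp_le_exp.mpr
      nlinarith [mul_le_mul_of_nonneg_right h2H hx2]
    have hbm1 : v ^ ((n:ℝ) - H' - 1) ≤ v⁻¹ := by
      have h1 : v ^ ((n:ℝ) - H' - 1) ≤ v ^ (-1 : ℝ) := by
        apply Real.rpow_le_rpow_of_exponent_ge hv hv1
        have : (1:ℝ) ≤ (n:ℝ) := by exact_mod_cast hn
        linarith
      rwa [Real.rpow_neg_one] at h1
    have hclaim : v⁻¹ * Real.exp (-(1/4) * (v ^ (-(2*H')) * x ^ 2)) ≤ 2 + D := by
      rcases le_or_gt (1/2 : ℝ) v with hv2 | hv2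
      · have h1 : v⁻¹ ≤ 2 := by
          rw [show (2:ℝ) = (1/2 : ℝ)⁻¹ by norm_num]
          exact inv_anti₀ (by norm_num) hv2
        have h2 : Real.exp (-(1/4) * (v ^ (-(2*H')) * x ^ 2)) ≤ 1 := by
          apply Real.exp_le_one_iff.mpr
          nlinarith
        have h3 : v⁻¹ * Real.exp (-(1/4) * (v ^ (-(2*H')) * x ^ 2)) ≤ 2 * 1 :=
          mul_le_mul h1 h2 (Real.exp_nonneg _) (by norm_num)
        linarith
      · -- v < 1/2 forces x² ≥ 1/4
        have hxabs : (1/2 : ℝ) ≤ -x := by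
          have hεx : ε * x = v - 1 := by simp [hvdef]
          have h1 : ε * (-x) = 1 - v := by nlinarith
          have h3 : ε * (-x) ≤ 1 * (-x) :=
            mul_le_mul_of_nonneg_right hε1 (by linarith)
          linarith
        have hx2' : (1/4 : ℝ) ≤ x ^ 2 := by nlinarith
        have hexpt : Real.exp (-(1/4) * (v ^ (-(2*H')) * x ^ 2))
            ≤ Real.exp (-((1/16) * v ^ (-(2*H')))) := by
          apply Real.exp_le_exp.mpr
          nlinarith
        have h4 : v⁻¹ * Real.exp (-(1/4) * (v ^ (-(2*H')) * x ^ 2))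
            ≤ v⁻¹ * Real.exp (-((1/16) * v ^ (-(2*H')))) :=
          mul_le_mul_of_nonneg_left hexpt (by positivity)
        have h5 := hDprop v hv hv1
        linarith
    have hCge : 2 + D ≤ C := by
      rw [hCdef]
      have : (0:ℝ) < 2^n * Real.exp 1 := by positivity
      linarith
    have hfin : v ^ ((n:ℝ) - H' - 1) * Real.exp (-(1/2) * (v ^ (-(2*H')) * x ^ 2))
        ≤ C * Real.exp (-(1/4) * x ^ 2) := by
      rw [hsplit, ← mul_assoc]
      calc v ^ ((n:ℝ) - H' - 1) * Real.exp (-(1/4) * (v ^ (-(2*H')) * x ^ 2))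
            * Real.exp (-(1/4) * (v ^ (-(2*H')) * x ^ 2))
          ≤ (v⁻¹ * Real.exp (-(1/4) * (v ^ (-(2*H')) * x ^ 2))) * Real.exp (-(1/4) * x ^ 2) := by
            apply mul_le_mul _ hexpx (Real.exp_nonneg _) (by positivity)
            exact mul_le_mul_of_nonneg_right hbm1 (Real.exp_nonneg _)
        _ ≤ (2 + D) * Real.exp (-(1/4) * x ^ 2) :=
            mul_le_mul_of_nonneg_right hclaim (Real.exp_nonneg _)
        _ ≤ C * Real.exp (-(1/4) * x ^ 2) :=
            mul_le_mul_of_nonneg_right hCge (Real.exp_nonneg _)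
    have hpos : 0 ≤ (1 + |x|) ^ n * Real.exp (-(1/8) * |x| ^ (2 - 2*H')) := by positivity
    linarith

lemma aux_integrable_tail (n : ℕ) {δ : ℝ} (hδ0 : 0 < δ) :
    Integrable (fun x : ℝ => (1 + |x|) ^ n * Real.exp (-(1/8) * |x| ^ δ)) := by
  set h : ℝ → ℝ := fun x => (1 + |x|) ^ n * Real.exp (-(1/8) * |x| ^ δ) with hhdef
  have hcont : Continuous h := by
    apply Continuous.mul
    · exact (continuous_const.add continuous_abs).pow n
    · exact Real.continuous_exp.comp
        (continuous_const.mul (continuous_abs.rpow_const (fun x => Or.inr hδ0.le)))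
  have hT : Tendsto (fun x : ℝ => x ^ (((n:ℝ)+2)/δ * δ) * Real.exp (-(1/8) * x ^ δ))
      atTop (𝓝 0) := by
    have h1 := tendsto_rpow_mul_exp_neg_mul_atTop_nhds_zero (((n:ℝ)+2)/δ) (1/8) (by norm_num)
    have h2 := h1.comp (tendsto_rpow_atTop hδ0)
    refine Filter.Tendsto.congr' ?_ h2
    filter_upwards [eventually_gt_atTop (0:ℝ)] with x hx
    simp only [Function.comp_apply]
    rw [← Real.rpow_mul hx.le, mul_comm δ (((n:ℝ)+2)/δ)]
  have hT' : Tendsto (fun x : ℝ => x ^ ((n:ℝ)+2) * Real.exp (-(1/8) * x ^ δ)) atTop (𝓝 0) := by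
    have : ((n:ℝ)+2)/δ * δ = (n:ℝ)+2 := by field_simp
    rwa [this] at hT
  have hO : h =O[atTop] fun x : ℝ => x ^ (-2 : ℝ) := by
    rw [isBigO_iff]
    refine ⟨2^n, ?_⟩
    filter_upwards [eventually_ge_atTop (1:ℝ),
      hT'.eventually (eventually_le_nhds (by norm_num : (0:ℝ) < 1))] with x hx1 hxT
    have hx0 : (0:ℝ) < x := by linarith
    have habs : |x| = x := abs_of_pos hx0
    have hh1 : h x ≤ 2^n * x^n * Real.exp (-(1/8) * x ^ δ) := by
      rw [hhdef]
      simp only [habs]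
      have : (1 + x)^n ≤ (2*x)^n := pow_le_pow_left₀ (by linarith) (by linarith) n
      have h2 : (2*x)^n = 2^n * x^n := mul_pow 2 x n
      nlinarith [Real.exp_pos (-(1/8) * x ^ δ), pow_nonneg hx0.le n,
        mul_le_mul_of_nonneg_right (this.trans_eq h2) (Real.exp_pos (-(1/8) * x ^ δ)).le]
    have hsplit : (x:ℝ)^n = x ^ ((n:ℝ)+2) * x ^ (-2:ℝ) := by
      rw [← Real.rpow_add hx0]
      rw [show (n:ℝ) + 2 + -2 = (n:ℝ) by ring, Real.rpow_natCast]
    have hh2 : 2^n * x^n * Real.exp (-(1/8) * x ^ δ)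
        = 2^n * (x ^ ((n:ℝ)+2) * Real.exp (-(1/8) * x ^ δ)) * x ^ (-2:ℝ) := by
      rw [hsplit]; ring
    have hx2pos : (0:ℝ) < x ^ (-2:ℝ) := Real.rpow_pos_of_pos hx0 _
    have hh3 : h x ≤ 2^n * x ^ (-2:ℝ) := by
      rw [hh2] at hh1
      have hstep : 2^n * (x ^ ((n:ℝ)+2) * Real.exp (-(1/8) * x ^ δ)) * x ^ (-2:ℝ)
          ≤ 2^n * 1 * x ^ (-2:ℝ) := by
        apply mul_le_mul_of_nonneg_right _ hx2pos.le
        exact mul_le_mul_of_nonneg_left hxT (by positivity)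
      calc h x ≤ 2^n * (x ^ ((n:ℝ)+2) * Real.exp (-(1/8) * x ^ δ)) * x ^ (-2:ℝ) := hh1
        _ ≤ 2^n * 1 * x ^ (-2:ℝ) := hstep
        _ = 2^n * x ^ (-2:ℝ) := by ring
    have hhnn : 0 ≤ h x := by rw [hhdef]; positivity
    rw [Real.norm_eq_abs, Real.norm_eq_abs, abs_of_nonneg hhnn, abs_of_pos hx2pos]
    exact hh3
  have hsymm : norm ∘ h =ᵐ[(volume : Measure ℝ)] norm ∘ h ∘ Neg.neg := by
    apply Filter.EventuallyEq.of_eq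
    funext x
    simp [hhdef, Function.comp, abs_neg]
  have hint : IntegrableAtFilter (fun x : ℝ => x ^ (-2:ℝ)) atTop (volume : Measure ℝ) :=
    ⟨Ioi 1, Ioi_mem_atTop 1, integrableOn_Ioi_rpow_of_lt (by norm_num) zero_lt_one⟩
  exact (hcont.locallyIntegrable).integrable_of_isBigO_atTop_of_norm_isNegInvariant hsymm hO hint

set_option maxHeartbeats 1600000 in
theorem stmt_13 (H' a : ℝ) (hH'0 : 0 < H') (hH'1 : H' < 1) (ha : 0 < a)
    (n : ℕ) (hn : 1 ≤ n)
    (L : ℝ → ℝ)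
    (hL : ∀ u : ℝ, L u = ∫ t in Set.Ioi (0 : ℝ),
      Real.exp (-(1 / 2) * (u * t ^ (-H' / ((n : ℝ) - H'))
        - a * t ^ ((1 - H') / ((n : ℝ) - H'))) ^ 2)) :
    Tendsto (fun u : ℝ =>
        L u / (Real.sqrt (2 * Real.pi) * ((n : ℝ) - H') * a ^ (-(n : ℝ)) * u ^ ((n : ℝ) - 1)))
      atTop (nhds 1) := by
  have hn1 : (1:ℝ) ≤ (n:ℝ) := by exact_mod_cast hn
  have hβ : 0 < (n:ℝ) - H' := by linarith
  obtain ⟨C, hC, hCprop⟩ := aux_bound H' hH'0 hH'1 n hn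
  set ε : ℝ → ℝ := fun u => a ^ (-H') * u ^ (H' - 1) with hεdef
  set φ : ℝ → ℝ → ℝ := fun u x => (1 + ε u * x) ^ ((n:ℝ) - H' - 1) *
      Real.exp (-(1/2) * ((1 + ε u * x) ^ (-H') * x) ^ 2) with hφdef
  set F : ℝ → ℝ → ℝ := fun u => (Set.Ioi (-(1/ε u))).indicator (φ u) with hFdef
  set g : ℝ → ℝ := fun x => C * Real.exp (-(1/4) * x^2)
      + (1 + |x|)^n * Real.exp (-(1/8) * |x| ^ (2 - 2*H')) with hgdef
  have hεpos : ∀ u : ℝ, 0 < u → 0 < ε u := by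
    intro u hu
    have h1 := Real.rpow_pos_of_pos ha (-H')
    have h2 := Real.rpow_pos_of_pos hu (H'-1)
    simp only [hεdef]
    positivity
  have hεlim : Tendsto ε atTop (𝓝 0) := by
    have h1 : Tendsto (fun u : ℝ => u ^ (-(1 - H'))) atTop (𝓝 0) :=
      tendsto_rpow_neg_atTop (by linarith)
    have h2 : (fun u : ℝ => u ^ (H' - 1)) = fun u : ℝ => u ^ (-(1 - H')) := by
      funext u; congr 1; ring
    have h3 := h1.const_mul (a ^ (-H'))
    rw [mul_zero] at h3
    simpa [hεdef, h2] using h3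
  have hinv : Tendsto (fun u => -(1/ε u)) atTop atBot := by
    have h1 : Tendsto (fun u : ℝ => a ^ H' * u ^ (1 - H')) atTop atTop :=
      (tendsto_rpow_atTop (by linarith)).const_mul_atTop (Real.rpow_pos_of_pos ha H')
    have h2 : (fun u => a ^ H' * u ^ (1 - H')) =ᶠ[atTop] fun u => 1/ε u := by
      filter_upwards [eventually_gt_atTop (0:ℝ)] with u hu
      simp only [hεdef]
      rw [one_div, mul_inv, ← Real.rpow_neg ha.le, ← Real.rpow_neg hu.le, neg_neg, neg_sub]
    have h3 : Tendsto (fun u => 1/ε u) atTop atTop := Tendsto.congr' h2 h1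
    exact tendsto_neg_atTop_atBot.comp h3
  have hLid : ∀ᶠ u in atTop, L u = ((n:ℝ) - H') * a ^ (-(n:ℝ)) * u ^ ((n:ℝ) - 1) *
      ∫ x in Set.Ioi (-(1/ε u)), φ u x := by
    filter_upwards [eventually_gt_atTop (0:ℝ)] with u hu
    rw [hL u]
    simpa only [hεdef, hφdef] using aux_change H' a hH'0 hH'1 ha n hn hu
  have hgauss : ∫ x : ℝ, Real.exp (-(1/2) * x^2) = Real.sqrt (2*Real.pi) := by
    have h := integral_gaussian (1/2)
    rw [show (Real.pi/(1/2 : ℝ)) = 2*Real.pi by ring] at h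
    exact h
  have hJ : Tendsto (fun u => ∫ x in Set.Ioi (-(1/ε u)), φ u x) atTop
      (𝓝 (Real.sqrt (2*Real.pi))) := by
    have hrw : (fun u => ∫ x in Set.Ioi (-(1/ε u)), φ u x) = fun u => ∫ x, F u x := by
      funext u
      rw [hFdef]
      exact (integral_indicator measurableSet_Ioi).symm
    rw [hrw, ← hgauss]
    apply tendsto_integral_filter_of_dominated_convergence g
    · -- measurability
      filter_upwards [eventually_gt_atTop (0:ℝ)] with u hu
      have hcont : ∀ x ∈ Set.Ioi (-(1/ε u)), ContinuousAt (φ u) x := by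
        intro x hx
        have hv : 0 < 1 + ε u * x := by
          have h1 : ε u * (-(1/ε u)) < ε u * x := mul_lt_mul_of_pos_left hx (hεpos u hu)
          have h2 : ε u * (-(1/ε u)) = -1 := by rw [mul_neg, mul_one_div_cancel (hεpos u hu).ne']
          rw [h2] at h1
          linarith
        have hb : ContinuousAt (fun x : ℝ => 1 + ε u * x) x :=
          (continuous_const.add (continuous_const.mul continuous_id)).continuousAt
        have c1 : ContinuousAt (fun x : ℝ => (1 + ε u * x) ^ ((n:ℝ) - H' - 1)) x :=
          ContinuousAt.comp (x := x) (g := fun y : ℝ => y ^ ((n:ℝ) - H' - 1))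
            (Real.continuousAt_rpow_const _ _ (Or.inl hv.ne')) hb
        have c2 : ContinuousAt (fun x : ℝ => (1 + ε u * x) ^ (-H')) x :=
          ContinuousAt.comp (x := x) (g := fun y : ℝ => y ^ (-H'))
            (Real.continuousAt_rpow_const _ _ (Or.inl hv.ne')) hb
        have c3 : ContinuousAt
            (fun x : ℝ => Real.exp (-(1/2) * ((1 + ε u * x) ^ (-H') * x) ^ 2)) x :=
          Real.continuous_exp.continuousAt.comp
            (((c2.mul continuousAt_id).pow 2).const_mul (-(1/2 : ℝ)))
        exact c1.mul c3
      have hCO : ContinuousOn (φ u) (Set.Ioi (-(1/ε u))) :=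
        fun x hx => (hcont x hx).continuousWithinAt
      have hae : AEMeasurable (F u) (volume : Measure ℝ) := by
        rw [hFdef]
        exact (aemeasurable_indicator_iff (μ := (volume : Measure ℝ)) (f := φ u)
          (measurableSet_Ioi (a := -(1/ε u)))).mpr (hCO.aemeasurable measurableSet_Ioi)
      exact hae.aestronglyMeasurable
    · -- uniform bound
      filter_upwards [hεlim.eventually_lt_const (zero_lt_one), eventually_gt_atTop (0:ℝ)]
        with u hε1 hu
      apply Eventually.of_forall
      intro x
      by_cases hxm : x ∈ Set.Ioi (-(1/ε u))
      · rw [hFdef]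
        simp only [Set.indicator_of_mem hxm]
        have hv : 0 < 1 + ε u * x := by
          have h1 : ε u * (-(1/ε u)) < ε u * x := mul_lt_mul_of_pos_left hxm (hεpos u hu)
          have h2 : ε u * (-(1/ε u)) = -1 := by rw [mul_neg, mul_one_div_cancel (hεpos u hu).ne']
          rw [h2] at h1
          linarith
        have hφnn : 0 ≤ φ u x := by
          simp only [hφdef]
          have := Real.rpow_nonneg hv.le ((n:ℝ) - H' - 1)
          positivity
        rw [Real.norm_eq_abs, abs_of_nonneg hφnn]
        exact hCprop (ε u) (hεpos u hu) hε1.le x hxm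
      · rw [hFdef]
        simp only [Set.indicator_of_notMem hxm]
        rw [norm_zero, hgdef]
        positivity
    · -- integrability of the dominating function
      rw [hgdef]
      exact ((integrable_exp_neg_mul_sq (by norm_num : (0:ℝ) < 1/4)).const_mul C).add
        (aux_integrable_tail n (by linarith : (0:ℝ) < 2 - 2*H'))
    · -- pointwise limit
      apply Eventually.of_forall
      intro x
      have hev : (fun u => φ u x) =ᶠ[atTop] fun u => F u x := by
        filter_upwards [hinv.eventually (eventually_lt_atBot x)] with u hu
        rw [hFdef]
        exact (Set.indicator_of_mem hu (φ u)).symm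
      have hv : Tendsto (fun u => 1 + ε u * x) atTop (𝓝 1) := by
        have h1 := (hεlim.mul_const x).const_add 1
        rw [zero_mul, add_zero] at h1
        exact h1
      have h1 : Tendsto (fun u => (1 + ε u * x) ^ ((n:ℝ) - H' - 1)) atTop (𝓝 1) := by
        have c := (Real.continuousAt_rpow_const 1 ((n:ℝ) - H' - 1) (Or.inl one_ne_zero)).tendsto
        have h2 := c.comp hv
        rw [Real.one_rpow] at h2
        exact h2
      have h2 : Tendsto (fun u => (1 + ε u * x) ^ (-H')) atTop (𝓝 1) := by
        have c := (Real.continuousAt_rpow_const 1 (-H') (Or.inl one_ne_zero)).tendsto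
        have h3 := c.comp hv
        rw [Real.one_rpow] at h3
        exact h3
      have h3 : Tendsto (fun u => Real.exp (-(1/2) * ((1 + ε u * x) ^ (-H') * x) ^ 2)) atTop
          (𝓝 (Real.exp (-(1/2) * x^2))) := by
        have h4 : Tendsto (fun u => ((1 + ε u * x) ^ (-H') * x) ^ 2) atTop (𝓝 (x^2)) := by
          have h5 := (h2.mul_const x).pow 2
          rw [one_mul] at h5
          exact h5
        have h6 := h4.const_mul (-(1/2 : ℝ))
        exact (Real.continuous_exp.tendsto _).comp h6
      have h7 : Tendsto (fun u => φ u x) atTop (𝓝 (Real.exp (-(1/2) * x^2))) := by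
        have h8 := h1.mul h3
        rw [one_mul] at h8
        exact h8
      exact Tendsto.congr' hev h7
  have hsq2π : (0:ℝ) < Real.sqrt (2*Real.pi) :=
    Real.sqrt_pos.mpr (by positivity)
  have hratio : (fun u : ℝ => L u / (Real.sqrt (2*Real.pi) * ((n:ℝ)-H') * a^(-(n:ℝ))
      * u^((n:ℝ)-1))) =ᶠ[atTop]
      fun u => (∫ x in Set.Ioi (-(1/ε u)), φ u x) / Real.sqrt (2*Real.pi) := by
    filter_upwards [hLid, eventually_gt_atTop (0:ℝ)] with u hLu hu
    rw [hLu]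
    have h1 : a ^ (-(n:ℝ)) ≠ 0 := (Real.rpow_pos_of_pos ha _).ne'
    have h2 : u ^ ((n:ℝ)-1) ≠ 0 := (Real.rpow_pos_of_pos hu _).ne'
    field_simp
  have hfin := hJ.div_const (Real.sqrt (2*Real.pi))
  rw [div_self hsq2π.ne'] at hfin
  exact Tendsto.congr' hratio.symm hfin
end

section
/- With the setup of the previous statement and Γ the covariance matrix Γ_{ij} = σ²h(i∧j) + (1/2)h^{2H}(i^{2H}+j^{2H}−|i−j|^{2H}) with H ∈ (1/2,1), σ,h > 0, and t = (h, 2h, …, nh), one has E[(ϑ̂_n − ϑ)²] ≤ C h^{−2} n^{2H−2} for some constant C > 0, so ϑ̂_n converges to ϑ in mean square as n → ∞. -/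
open MeasureTheory Matrix Filter Set


lemma integ_aux {α : ℝ} (hα1 : 1 < α) (hα2 : α < 2) (r : ℝ) :
    IntegrableOn (fun u => (1 - Real.cos (r * u)) * u ^ (-1 - α)) (Ioi (0:ℝ)) := by
  have hmeas : AEStronglyMeasurable (fun u : ℝ => (1 - Real.cos (r * u)) * u ^ (-1 - α))
      (volume.restrict (Ioi (0:ℝ))) := by
    apply Measurable.aestronglyMeasurable
    fun_prop
  have h1 : IntegrableOn (fun u => (1 - Real.cos (r * u)) * u ^ (-1 - α)) (Ioc (0:ℝ) 1) := by
    have hig : IntegrableOn (fun u : ℝ => r ^ 2 / 2 * u ^ (1 - α)) (Ioc (0:ℝ) 1) := by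
      have := (intervalIntegral.intervalIntegrable_rpow' (a := 0) (b := 1)
        (r := 1 - α) (by linarith)).const_mul (r ^ 2 / 2)
      rw [intervalIntegrable_iff] at this
      simpa [uIoc_of_le (by norm_num : (0:ℝ) ≤ 1)] using this
    refine hig.integrable.mono' (hmeas.mono_measure (Measure.restrict_mono Ioc_subset_Ioi_self le_rfl)) ?_
    filter_upwards [ae_restrict_mem measurableSet_Ioc] with u hu
    have hu0 : 0 < u := hu.1
    have hcos : 1 - Real.cos (r * u) ≤ (r * u) ^ 2 / 2 := by
      nlinarith [Real.one_sub_sq_div_two_le_cos (x := r * u)]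
    have hcos0 : 0 ≤ 1 - Real.cos (r * u) := by nlinarith [Real.cos_le_one (r * u)]
    have hrp : (0:ℝ) ≤ u ^ (-1 - α) := Real.rpow_nonneg hu0.le _
    rw [Real.norm_eq_abs, abs_of_nonneg (mul_nonneg hcos0 hrp)]
    calc (1 - Real.cos (r * u)) * u ^ (-1 - α) ≤ (r * u) ^ 2 / 2 * u ^ (-1 - α) := by
          exact mul_le_mul_of_nonneg_right hcos hrp
      _ = r ^ 2 / 2 * (u ^ (2:ℝ) * u ^ (-1 - α)) := by
          rw [Real.rpow_two]; ring
      _ = r ^ 2 / 2 * u ^ (1 - α) := by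
          rw [← Real.rpow_add hu0]; norm_num; left; congr 1; ring
  have h2 : IntegrableOn (fun u => (1 - Real.cos (r * u)) * u ^ (-1 - α)) (Ioi (1:ℝ)) := by
    have hig : IntegrableOn (fun u : ℝ => 2 * u ^ (-1 - α)) (Ioi (1:ℝ)) :=
      (integrableOn_Ioi_rpow_of_lt (by linarith) one_pos).const_mul 2
    refine hig.integrable.mono' (hmeas.mono_measure (Measure.restrict_mono (Ioi_subset_Ioi (by norm_num)) le_rfl)) ?_
    filter_upwards [ae_restrict_mem measurableSet_Ioi] with u hu
    have hu0 : (0:ℝ) < u := lt_trans one_pos hu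
    have hcos0 : 0 ≤ 1 - Real.cos (r * u) := by nlinarith [Real.cos_le_one (r * u)]
    have hrp : (0:ℝ) ≤ u ^ (-1 - α) := Real.rpow_nonneg hu0.le _
    rw [Real.norm_eq_abs, abs_of_nonneg (mul_nonneg hcos0 hrp)]
    have : 1 - Real.cos (r * u) ≤ 2 := by nlinarith [Real.neg_one_le_cos (r * u)]
    exact mul_le_mul_of_nonneg_right this hrp
  have : Ioi (0:ℝ) = Ioc (0:ℝ) 1 ∪ Ioi 1 := (Ioc_union_Ioi_eq_Ioi (by norm_num)).symm
  rw [this]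
  exact h1.union h2



lemma scale_aux {α : ℝ} (hα1 : 1 < α) (hα2 : α < 2) (r : ℝ) :
    ∫ u in Ioi (0:ℝ), (1 - Real.cos (r * u)) * u ^ (-1 - α)
      = |r| ^ α * ∫ u in Ioi (0:ℝ), (1 - Real.cos u) * u ^ (-1 - α) := by
  have key : ∀ s : ℝ, 0 < s →
      ∫ u in Ioi (0:ℝ), (1 - Real.cos (s * u)) * u ^ (-1 - α)
        = s ^ α * ∫ u in Ioi (0:ℝ), (1 - Real.cos u) * u ^ (-1 - α) := by
    intro s hs
    have h1 : ∀ u ∈ Ioi (0:ℝ), (1 - Real.cos (s * u)) * u ^ (-1 - α)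
        = s ^ (1 + α) * ((1 - Real.cos (s * u)) * (s * u) ^ (-1 - α)) := by
      intro u hu
      have hu0 : (0:ℝ) < u := hu
      rw [Real.mul_rpow hs.le hu0.le]
      rw [show s ^ (1+α) * ((1 - Real.cos (s*u)) * (s ^ (-1-α) * u ^ (-1-α)))
          = (s ^ (1+α) * s ^ (-1-α)) * ((1 - Real.cos (s*u)) * u ^ (-1-α)) by ring,
        ← Real.rpow_add hs]
      norm_num
    rw [setIntegral_congr_fun measurableSet_Ioi h1, integral_const_mul,
      integral_comp_mul_left_Ioi (fun v => (1 - Real.cos v) * v ^ (-1 - α)) 0 hs,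
      mul_zero, smul_eq_mul, ← mul_assoc]
    congr 1
    rw [← Real.rpow_neg_one s, ← Real.rpow_add hs]
    congr 1; ring
  rcases lt_trichotomy r 0 with hr | hr | hr
  · have : ∀ u ∈ Ioi (0:ℝ), (1 - Real.cos (r * u)) * u ^ (-1 - α)
        = (1 - Real.cos (-r * u)) * u ^ (-1 - α) := by
      intro u _; rw [show -r * u = -(r * u) by ring, Real.cos_neg]
    rw [setIntegral_congr_fun measurableSet_Ioi this, key (-r) (by linarith), abs_of_neg hr]
  · simp [hr, Real.zero_rpow (by positivity : α ≠ 0)]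
  · rw [key r hr, abs_of_pos hr]

lemma J_pos {α : ℝ} (hα1 : 1 < α) (hα2 : α < 2) :
    0 < ∫ u in Ioi (0:ℝ), (1 - Real.cos u) * u ^ (-1 - α) := by
  have hint : IntegrableOn (fun u => (1 - Real.cos u) * u ^ (-1 - α)) (Ioi (0:ℝ)) := by
    simpa using integ_aux hα1 hα2 1
  have hnn : 0 ≤ᵐ[volume.restrict (Ioi (0:ℝ))]
      fun u => (1 - Real.cos u) * u ^ (-1 - α) := by
    filter_upwards [ae_restrict_mem measurableSet_Ioi] with u hu
    have : (0:ℝ) < u := hu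
    have hc := Real.cos_le_one u
    exact mul_nonneg (by linarith) (Real.rpow_nonneg this.le _)
  rw [setIntegral_pos_iff_support_of_nonneg_ae hnn hint]
  refine lt_of_lt_of_le ?_ (measure_mono (?_ : Ioo (1:ℝ) 3 ⊆ _))
  · simp [Real.volume_Ioo]
  · intro u hu
    have hu1 : (1:ℝ) < u := hu.1
    have hu3 : u < 3 := hu.2
    constructor
    · have hcos : Real.cos u < 1 := by
        
        have h3 : u < Real.pi := lt_trans hu3 Real.pi_gt_three
        have h4 := Real.cos_lt_cos_of_nonneg_of_le_pi (le_refl (0:ℝ)) h3.le (by linarith : (0:ℝ) < u)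
        simpa using h4
      have hu0 : (0:ℝ) < u := by linarith
      have : (0:ℝ) < u ^ (-1 - α) := Real.rpow_pos_of_pos hu0 _
      simp only [Function.mem_support]
      exact ne_of_gt (mul_pos (by linarith) this)
    · show (0:ℝ) < u; linarith



lemma kernel_psd {α : ℝ} (hα1 : 1 < α) (hα2 : α < 2) {n : ℕ} (t x : Fin n → ℝ)
    (ht : ∀ i, 0 ≤ t i) :
    0 ≤ ∑ i, ∑ j, x i * x j * (t i ^ α + t j ^ α - |t i - t j| ^ α) := by
  set J : ℝ := ∫ u in Ioi (0:ℝ), (1 - Real.cos u) * u ^ (-1 - α) with hJdef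
  have hJ : 0 < J := J_pos hα1 hα2
  set f : Fin n → Fin n → ℝ → ℝ := fun i j u =>
    x i * x j * ((1 - Real.cos (t i * u)) * u ^ (-1 - α))
      + x i * x j * ((1 - Real.cos (t j * u)) * u ^ (-1 - α))
      - x i * x j * ((1 - Real.cos ((t i - t j) * u)) * u ^ (-1 - α)) with hfdef
  have hfint : ∀ i j, IntegrableOn (f i j) (Ioi (0:ℝ)) := fun i j =>
    (((integ_aux hα1 hα2 (t i)).const_mul _).add
      ((integ_aux hα1 hα2 (t j)).const_mul _)).sub
      ((integ_aux hα1 hα2 (t i - t j)).const_mul _)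
  have hfval : ∀ i j, ∫ u in Ioi (0:ℝ), f i j u
      = x i * x j * (J * t i ^ α + J * t j ^ α - J * |t i - t j| ^ α) := by
    intro i j
    simp only [hfdef]
    have hA1 : Integrable (fun u : ℝ => x i * x j * ((1 - Real.cos (t i * u)) * u ^ (-1 - α)))
        (volume.restrict (Ioi 0)) := (integ_aux hα1 hα2 (t i)).const_mul _
    have hA2 : Integrable (fun u : ℝ => x i * x j * ((1 - Real.cos (t j * u)) * u ^ (-1 - α)))
        (volume.restrict (Ioi 0)) := (integ_aux hα1 hα2 (t j)).const_mul _
    have hA3 : Integrable (fun u : ℝ =>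
        x i * x j * ((1 - Real.cos ((t i - t j) * u)) * u ^ (-1 - α)))
        (volume.restrict (Ioi 0)) := (integ_aux hα1 hα2 (t i - t j)).const_mul _
    have hA12 : Integrable (fun u : ℝ => x i * x j * ((1 - Real.cos (t i * u)) * u ^ (-1 - α))
        + x i * x j * ((1 - Real.cos (t j * u)) * u ^ (-1 - α)))
        (volume.restrict (Ioi 0)) := hA1.add hA2
    rw [integral_sub hA12 hA3, integral_add hA1 hA2,
      integral_const_mul, integral_const_mul, integral_const_mul,
      scale_aux hα1 hα2, scale_aux hα1 hα2, scale_aux hα1 hα2,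
      abs_of_nonneg (ht i), abs_of_nonneg (ht j)]
    ring
  have key : J * (∑ i, ∑ j, x i * x j * (t i ^ α + t j ^ α - |t i - t j| ^ α))
      = ∫ u in Ioi (0:ℝ), ∑ i, ∑ j, f i j u := by
    rw [integral_finset_sum _ (fun i _ => integrable_finset_sum _ (fun j _ => hfint i j))]
    simp_rw [integral_finset_sum _ (fun j _ => hfint _ j), hfval, Finset.mul_sum]
    exact Finset.sum_congr rfl fun i _ => Finset.sum_congr rfl fun j _ => by ring
  have hpos : 0 ≤ ∫ u in Ioi (0:ℝ), ∑ i, ∑ j, f i j u := by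
    apply setIntegral_nonneg measurableSet_Ioi
    intro u hu
    have hu0 : (0:ℝ) < u := hu
    have hpt : ∑ i, ∑ j, f i j u
        = ((∑ i, x i * (1 - Real.cos (t i * u)))^2 + (∑ i, x i * Real.sin (t i * u))^2)
          * u ^ (-1 - α) := by
      have hterm : ∀ i j : Fin n, f i j u
          = (x i * (1 - Real.cos (t i * u)) * (x j * (1 - Real.cos (t j * u)))
            + x i * Real.sin (t i * u) * (x j * Real.sin (t j * u))) * u ^ (-1 - α) := by
        intro i j
        have hc : Real.cos ((t i - t j) * u)
            = Real.cos (t i * u) * Real.cos (t j * u)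
              + Real.sin (t i * u) * Real.sin (t j * u) := by
          rw [sub_mul, Real.cos_sub]
        simp only [hfdef, hc]
        ring
      simp_rw [hterm]
      rw [sq, sq, Finset.sum_mul_sum, Finset.sum_mul_sum, add_mul, Finset.sum_mul,
        Finset.sum_mul, ← Finset.sum_add_distrib]
      refine Finset.sum_congr rfl fun i _ => ?_
      rw [Finset.sum_mul, Finset.sum_mul, ← Finset.sum_add_distrib]
      exact Finset.sum_congr rfl fun j _ => by ring
    rw [hpt]
    have : (0:ℝ) ≤ u ^ (-1 - α) := Real.rpow_nonneg hu0.le _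
    positivity
  nlinarith [key ▸ hpos]


lemma min_form {n : ℕ} (x : Fin n → ℝ) :
    ∑ i, ∑ j, x i * x j * min ((i:ℝ)+1) ((j:ℝ)+1)
      = ∑ k ∈ Finset.range n,
          (∑ i ∈ Finset.univ.filter (fun i : Fin n => k ≤ (i:ℕ)), x i)^2 := by
  have hmin : ∀ i j : Fin n, min ((i:ℝ)+1) ((j:ℝ)+1)
      = ∑ k ∈ Finset.range n, (if k ≤ (i:ℕ) ∧ k ≤ (j:ℕ) then (1:ℝ) else 0) := by
    intro i j
    rw [Finset.sum_boole]
    have hfil : Finset.filter (fun k => k ≤ (i:ℕ) ∧ k ≤ (j:ℕ)) (Finset.range n)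
        = Finset.range (min (i:ℕ) (j:ℕ) + 1) := by
      ext k
      simp only [Finset.mem_filter, Finset.mem_range]
      have := i.isLt; have := j.isLt
      omega
    rw [hfil, Finset.card_range]
    push_cast [Nat.cast_min]
    rw [← min_add_add_right]
  calc ∑ i, ∑ j, x i * x j * min ((i:ℝ)+1) ((j:ℝ)+1)
      = ∑ i, ∑ j, ∑ k ∈ Finset.range n,
          x i * x j * (if k ≤ (i:ℕ) ∧ k ≤ (j:ℕ) then (1:ℝ) else 0) := by
        simp_rw [hmin, Finset.mul_sum]
    _ = ∑ k ∈ Finset.range n, ∑ i, ∑ j,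
          x i * x j * (if k ≤ (i:ℕ) ∧ k ≤ (j:ℕ) then (1:ℝ) else 0) := by
        rw [show (∑ i : Fin n, ∑ j : Fin n, ∑ k ∈ Finset.range n,
            x i * x j * (if k ≤ (i:ℕ) ∧ k ≤ (j:ℕ) then (1:ℝ) else 0))
          = ∑ i : Fin n, ∑ k ∈ Finset.range n, ∑ j : Fin n,
            x i * x j * (if k ≤ (i:ℕ) ∧ k ≤ (j:ℕ) then (1:ℝ) else 0) from
          Finset.sum_congr rfl fun i _ => Finset.sum_comm]
        exact Finset.sum_comm
    _ = ∑ k ∈ Finset.range n,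
          (∑ i ∈ Finset.univ.filter (fun i : Fin n => k ≤ (i:ℕ)), x i)^2 := by
        refine Finset.sum_congr rfl fun k _ => ?_
        rw [sq, Finset.sum_filter, Finset.sum_mul_sum]
        refine Finset.sum_congr rfl fun i _ => Finset.sum_congr rfl fun j _ => ?_
        by_cases hi : k ≤ (i:ℕ) <;> by_cases hj : k ≤ (j:ℕ) <;> simp [hi, hj]
    
lemma min_form_pos {n : ℕ} (x : Fin n → ℝ) (hx : x ≠ 0) :
    0 < ∑ i, ∑ j, x i * x j * min ((i:ℝ)+1) ((j:ℝ)+1) := by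
  rw [min_form]
  set Q : ℕ → ℝ := fun k => ∑ i ∈ Finset.univ.filter (fun i : Fin n => k ≤ (i:ℕ)), x i with hQ
  have hnn : ∀ k ∈ Finset.range n, 0 ≤ (Q k)^2 := fun k _ => sq_nonneg _
  rcases lt_or_eq_of_le (Finset.sum_nonneg hnn) with hlt | heq
  · exact hlt
  exfalso
  have hzero : ∀ k, Q k = 0 := by
    intro k
    by_cases hk : k < n
    · have := (Finset.sum_eq_zero_iff_of_nonneg hnn).mp heq.symm k (Finset.mem_range.mpr hk)
      exact pow_eq_zero_iff (two_ne_zero) |>.mp this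
    · refine Finset.sum_eq_zero fun i hi => ?_
      rw [Finset.mem_filter] at hi
      exact absurd hi.2 (by have := i.isLt; omega)
  apply hx
  funext j
  have key : Q (j:ℕ) - Q ((j:ℕ)+1) = x j := by
    rw [hQ]
    simp only [Finset.sum_filter]
    rw [← Finset.sum_sub_distrib]
    rw [show (∑ i : Fin n, ((if (j:ℕ) ≤ (i:ℕ) then x i else 0)
        - (if (j:ℕ)+1 ≤ (i:ℕ) then x i else 0)))
      = ∑ i : Fin n, (if i = j then x i else 0) from
      Finset.sum_congr rfl fun i _ => by
        by_cases hij : i = j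
        · subst hij
          simp
        · have hvij : (i:ℕ) ≠ (j:ℕ) := fun hc => hij (Fin.ext hc)
          by_cases h1 : (j:ℕ) ≤ (i:ℕ)
          · have h2 : (j:ℕ)+1 ≤ (i:ℕ) := by omega
            simp [h1, h2, hij]
          · have h2 : ¬((j:ℕ)+1 ≤ (i:ℕ)) := by omega
            simp [h1, h2, hij]]
    simp
  rw [hzero, hzero] at key
  simpa using key.symm



lemma sum_sq_lb (n : ℕ) : (n:ℝ)^3/3 ≤ ∑ k ∈ Finset.range n, ((k:ℝ)+1)^2 := by
  induction n with
  | zero => simp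
  | succ m ih =>
      rw [Finset.sum_range_succ]
      push_cast
      nlinarith [ih, Nat.cast_nonneg (α := ℝ) m]

lemma sum_lin_ub (n : ℕ) : ∑ k ∈ Finset.range n, ((k:ℝ)+1) ≤ (n:ℝ)^2 := by
  induction n with
  | zero => simp
  | succ m ih =>
      rw [Finset.sum_range_succ]
      push_cast
      nlinarith [ih, Nat.cast_nonneg (α := ℝ) m]

lemma dot_symm {n : ℕ} (M : Matrix (Fin n) (Fin n) ℝ) (hM : Mᵀ = M) (a b : Fin n → ℝ) :
    a ⬝ᵥ (M *ᵥ b) = b ⬝ᵥ (M *ᵥ a) := by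
  rw [Matrix.dotProduct_mulVec]
  conv_lhs => rw [← hM]
  rw [Matrix.vecMul_transpose, dotProduct_comm]

set_option maxHeartbeats 1000000 in
/-- Mean-square convergence of the discrete MLE of the drift: for the mixed-fBm
covariance matrix `Γ` and sampling times `t_i = i·h`, the variance of the MLE is bounded
by `C h⁻² n^{2H−2}`, which tends to `0` as `n → ∞`. -/
theorem stmt_16 (σ h H : ℝ) (hσ : 0 < σ) (hh : 0 < h) (hH1 : 1/2 < H) (hH2 : H < 1) :
    ∃ C > (0 : ℝ),
      (∀ (n : ℕ), 1 ≤ n →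
        ∀ {Ω : Type} [MeasurableSpace Ω] (μ : Measure Ω) [IsProbabilityMeasure μ]
          (G : Ω → Fin n → ℝ) (ϑ : ℝ) (Γ : Matrix (Fin n) (Fin n) ℝ),
          (∀ i j : Fin n, Γ i j =
            σ ^ 2 * h * (min ((i : ℝ) + 1) ((j : ℝ) + 1)) +
              (1 / 2) * h ^ (2 * H) *
                (((i : ℝ) + 1) ^ (2 * H) + ((j : ℝ) + 1) ^ (2 * H)
                  - |(i : ℝ) - (j : ℝ)| ^ (2 * H))) →
          (∀ i, ∫ ω, G ω i ∂μ = 0) →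
          (∀ i j, ∫ ω, G ω i * G ω j ∂μ = Γ i j) →
          (∀ i, Integrable (fun ω => G ω i) μ) →
          (∀ i j, Integrable (fun ω => G ω i * G ω j) μ) →
          ∫ ω, (((fun k : Fin n => ((k : ℝ) + 1) * h) ⬝ᵥ
                  (Γ⁻¹ *ᵥ fun i => ϑ * ((i : ℝ) + 1) * h - G ω i)) /
                ((fun k : Fin n => ((k : ℝ) + 1) * h) ⬝ᵥ
                  (Γ⁻¹ *ᵥ fun k : Fin n => ((k : ℝ) + 1) * h)) - ϑ) ^ 2 ∂μ ≤
            C * h ^ (-(2 : ℝ)) * (n : ℝ) ^ (2 * H - 2)) ∧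
      Tendsto (fun n : ℕ => C * h ^ (-(2 : ℝ)) * (n : ℝ) ^ (2 * H - 2)) atTop (nhds 0) := by
  have hK : 0 < σ^2*h + h^(2*H) := by positivity
  refine ⟨9*(σ^2*h + h^(2*H)), by positivity, ?_, ?_⟩
  · intro n hn Ω _ μ _ G ϑ Γ hΓ hmean hcov hGint1 hGint2
    set t : Fin n → ℝ := fun k : Fin n => ((k : ℝ) + 1) * h with ht_def
    have hnR : (1:ℝ) ≤ (n:ℝ) := by exact_mod_cast hn
    have hnpos : (0:ℝ) < (n:ℝ) := by linarith
    -- symmetry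
    have hΓsymT : Γᵀ = Γ := by
      ext i j
      simp only [Matrix.transpose_apply]
      rw [hΓ, hΓ, min_comm, abs_sub_comm]
      ring
    have hΓsym : Γ.IsHermitian :=
      Matrix.IsHermitian.ext fun i j => by
        simpa using congrFun (congrFun hΓsymT i) j
    -- quadratic form expansion
    have hquadform : ∀ z : Fin n → ℝ, z ⬝ᵥ (Γ *ᵥ z) = ∑ i, ∑ j, z i * Γ i j * z j := by
      intro z
      simp only [dotProduct, Matrix.mulVec, Finset.mul_sum]
      exact Finset.sum_congr rfl fun i _ => Finset.sum_congr rfl fun j _ => by ring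
    -- positive definiteness
    have hPD : Γ.PosDef := by
      refine Matrix.PosDef.of_dotProduct_mulVec_pos hΓsym fun z hz => ?_
      have hstar : star z = z := by funext i; simp
      rw [hstar, hquadform]
      have hsplit : ∑ i, ∑ j, z i * Γ i j * z j
          = σ^2*h * (∑ i, ∑ j, z i * z j * min ((i:ℝ)+1) ((j:ℝ)+1))
            + (1/2)*h^(2*H) * (∑ i, ∑ j, z i * z j *
              (((i:ℝ)+1)^(2*H) + ((j:ℝ)+1)^(2*H) - |((i:ℝ)+1) - ((j:ℝ)+1)|^(2*H))) := by
        rw [Finset.mul_sum, Finset.mul_sum, ← Finset.sum_add_distrib]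
        refine Finset.sum_congr rfl fun i _ => ?_
        rw [Finset.mul_sum, Finset.mul_sum, ← Finset.sum_add_distrib]
        refine Finset.sum_congr rfl fun j _ => ?_
        rw [hΓ, show ((i:ℝ)+1) - ((j:ℝ)+1) = (i:ℝ) - (j:ℝ) by ring]
        ring
      rw [hsplit]
      have h1 : 0 < ∑ i, ∑ j, z i * z j * min ((i:ℝ)+1) ((j:ℝ)+1) := min_form_pos z hz
      have h2 : 0 ≤ ∑ i, ∑ j, z i * z j *
          (((i:ℝ)+1)^(2*H) + ((j:ℝ)+1)^(2*H) - |((i:ℝ)+1) - ((j:ℝ)+1)|^(2*H)) :=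
        kernel_psd (by linarith) (by linarith) (fun i : Fin n => (i:ℝ)+1) z
          (fun i => by positivity)
      have hσh : 0 < σ^2*h := by positivity
      have hhH : 0 < h^(2*H) := Real.rpow_pos_of_pos hh _
      nlinarith
    have hdet : IsUnit Γ.det := hPD.det_pos.ne'.isUnit
    have hΓΓinv : Γ * Γ⁻¹ = 1 := Matrix.mul_nonsing_inv Γ hdet
    have hinvsymT : Γ⁻¹ᵀ = Γ⁻¹ := by
      have := hΓsym.inv
      rw [Matrix.IsHermitian, Matrix.conjTranspose] at this
      ext i j; simpa using congrFun (congrFun this i) j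
    set y : Fin n → ℝ := Γ⁻¹ *ᵥ t with hy_def
    set D : ℝ := t ⬝ᵥ y with hD_def
    set Q : ℝ := t ⬝ᵥ (Γ *ᵥ t) with hQ_def
    set N2 : ℝ := t ⬝ᵥ t with hN2_def
    have hΓy : Γ *ᵥ y = t := by
      rw [hy_def, Matrix.mulVec_mulVec, hΓΓinv, Matrix.one_mulVec]
    -- covariance quadratic identity
    have hquad : ∀ z : Fin n → ℝ,
        ∫ ω, (∑ i, z i * G ω i)^2 ∂μ = z ⬝ᵥ (Γ *ᵥ z) := by
      intro z
      have hsq : ∀ ω, (∑ i, z i * G ω i)^2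
          = ∑ i, ∑ j, (z i * z j) * (G ω i * G ω j) := by
        intro ω
        rw [sq, Finset.sum_mul_sum]
        exact Finset.sum_congr rfl fun i _ => Finset.sum_congr rfl fun j _ => by ring
      simp_rw [hsq]
      rw [integral_finset_sum _ (fun i _ => integrable_finset_sum _
        (fun j _ => (hGint2 i j).const_mul _))]
      have : ∀ i, ∫ ω, (∑ j, (z i * z j) * (G ω i * G ω j)) ∂μ
          = ∑ j, (z i * z j) * Γ i j := by
        intro i
        rw [integral_finset_sum _ (fun j _ => (hGint2 i j).const_mul _)]
        exact Finset.sum_congr rfl fun j _ => by rw [integral_const_mul, hcov]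
      simp_rw [this, hquadform]
      exact Finset.sum_congr rfl fun i _ => Finset.sum_congr rfl fun j _ => by ring
    have hPSDcov : ∀ z : Fin n → ℝ, 0 ≤ z ⬝ᵥ (Γ *ᵥ z) := by
      intro z
      rw [← hquad z]
      exact integral_nonneg fun ω => sq_nonneg _
    -- positivity of base quantities
    have htne : t ≠ 0 := by
      intro hcontra
      have h0 : t ⟨0, hn⟩ = 0 := by rw [hcontra]; rfl
      rw [ht_def] at h0
      simp at h0
      linarith
    have hQpos : 0 < Q := by
      have := hPD.dotProduct_mulVec_pos htne
      have hstar : star t = t := by funext i; simp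
      rwa [hstar, ← hQ_def] at this
    have hN2lb : h^2 * (n:ℝ)^3 / 3 ≤ N2 := by
      rw [hN2_def]
      have : t ⬝ᵥ t = ∑ k : Fin n, (((k:ℝ)+1)*h)^2 := by
        simp only [dotProduct, ht_def]
        exact Finset.sum_congr rfl fun k _ => by ring
      rw [this]
      have : ∑ k : Fin n, (((k:ℝ)+1)*h)^2 = h^2 * ∑ k ∈ Finset.range n, ((k:ℝ)+1)^2 := by
        rw [Finset.mul_sum, ← Fin.sum_univ_eq_sum_range (fun k => h^2 * ((k:ℝ)+1)^2)]
        exact Finset.sum_congr rfl fun k _ => by ring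
      rw [this]
      have := sum_sq_lb n
      nlinarith
    have hN2pos : 0 < N2 := lt_of_lt_of_le (by positivity) hN2lb
    -- Cauchy-Schwarz via discriminant
    have hCS : N2^2 ≤ Q * D := by
      have hq : ∀ lam : ℝ, 0 ≤ Q * (lam * lam) + (2*N2) * lam + D := by
        intro lam
        have hexp := hPSDcov (lam • t + y)
        have h1 : y ⬝ᵥ (Γ *ᵥ t) = t ⬝ᵥ t := by rw [dot_symm Γ hΓsymT y t, hΓy]
        have h2 : y ⬝ᵥ t = t ⬝ᵥ y := by rw [dotProduct_comm]
        rw [Matrix.mulVec_add, Matrix.mulVec_smul, hΓy] at hexp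
        simp only [dotProduct_add, add_dotProduct, smul_dotProduct,
          dotProduct_smul, smul_eq_mul, h1, h2] at hexp
        rw [← hN2_def, ← hD_def, ← hQ_def] at hexp
        nlinarith [hexp]
      have := discrim_le_zero hq
      rw [discrim] at this
      nlinarith
    have hDpos : 0 < D := by
      nlinarith
    -- entrywise bound
    have hσh : (0:ℝ) < σ^2*h := by positivity
    have hhH : (0:ℝ) < h^(2*H) := Real.rpow_pos_of_pos hh _
    have hn2H : (n:ℝ) ≤ (n:ℝ)^(2*H) := by
      calc (n:ℝ) = (n:ℝ)^(1:ℝ) := (Real.rpow_one _).symm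
        _ ≤ _ := Real.rpow_le_rpow_of_exponent_le hnR (by linarith)
    have hentry : ∀ i j : Fin n, Γ i j ≤ (σ^2*h + h^(2*H)) * (n:ℝ)^(2*H) := by
      intro i j
      have hiR : ((i:ℝ)) + 1 ≤ (n:ℝ) := by
        have : ((i:ℕ)) + 1 ≤ n := Nat.succ_le_of_lt i.isLt
        exact_mod_cast this
      have hjR : ((j:ℝ)) + 1 ≤ (n:ℝ) := by
        have : ((j:ℕ)) + 1 ≤ n := Nat.succ_le_of_lt j.isLt
        exact_mod_cast this
      have hip : ((i:ℝ)+1)^(2*H) ≤ (n:ℝ)^(2*H) :=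
        Real.rpow_le_rpow (by positivity) hiR (by linarith)
      have hjp : ((j:ℝ)+1)^(2*H) ≤ (n:ℝ)^(2*H) :=
        Real.rpow_le_rpow (by positivity) hjR (by linarith)
      have habs : 0 ≤ |(i:ℝ) - (j:ℝ)|^(2*H) := Real.rpow_nonneg (abs_nonneg _) _
      have hminb : min ((i:ℝ)+1) ((j:ℝ)+1) ≤ (n:ℝ) := le_trans (min_le_left _ _) hiR
      have e1 : σ^2*h * min ((i:ℝ)+1) ((j:ℝ)+1) ≤ σ^2*h * (n:ℝ)^(2*H) :=
        mul_le_mul_of_nonneg_left (hminb.trans hn2H) hσh.le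
      have e2 : (1/2)*h^(2*H) * (((i:ℝ)+1)^(2*H) + ((j:ℝ)+1)^(2*H) - |(i:ℝ)-(j:ℝ)|^(2*H))
          ≤ h^(2*H) * (n:ℝ)^(2*H) := by nlinarith [hip, hjp, habs, hhH]
      rw [hΓ]
      nlinarith [e1, e2]
    -- upper bound on Q
    have htnn : ∀ k : Fin n, 0 ≤ t k := fun k => by rw [ht_def]; positivity
    have hsum_t : ∑ k, t k ≤ h * (n:ℝ)^2 := by
      have h1 : ∑ k : Fin n, t k = (∑ k ∈ Finset.range n, ((k:ℝ)+1)) * h := by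
        rw [Finset.sum_mul, ← Fin.sum_univ_eq_sum_range (fun k => ((k:ℝ)+1) * h)]
      rw [h1, mul_comm]
      exact mul_le_mul_of_nonneg_left (sum_lin_ub n) hh.le
    have hQub : Q ≤ (σ^2*h + h^(2*H)) * (n:ℝ)^(2*H) * (h^2 * (n:ℝ)^4) := by
      have hMnn : (0:ℝ) ≤ (σ^2*h + h^(2*H)) * (n:ℝ)^(2*H) := by positivity
      have step1 : Q ≤ ((σ^2*h + h^(2*H)) * (n:ℝ)^(2*H)) * ((∑ k, t k) * (∑ k, t k)) := by
        rw [hQ_def, hquadform t, Finset.sum_mul_sum, Finset.mul_sum]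
        refine Finset.sum_le_sum fun i _ => ?_
        rw [Finset.mul_sum]
        refine Finset.sum_le_sum fun j _ => ?_
        have hk := hentry i j
        nlinarith [htnn i, htnn j,
          mul_nonneg (mul_nonneg (htnn i) (sub_nonneg.mpr hk)) (htnn j)]
      have step2 : (∑ k, t k) * (∑ k, t k) ≤ (h * (n:ℝ)^2) * (h * (n:ℝ)^2) := by
        have hsnn : 0 ≤ ∑ k, t k := Finset.sum_nonneg fun k _ => htnn k
        nlinarith [hsum_t, hsnn]
      calc Q ≤ _ := step1
        _ ≤ ((σ^2*h + h^(2*H)) * (n:ℝ)^(2*H)) * ((h * (n:ℝ)^2) * (h * (n:ℝ)^2)) :=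
          mul_le_mul_of_nonneg_left step2 hMnn
        _ = (σ^2*h + h^(2*H)) * (n:ℝ)^(2*H) * (h^2 * (n:ℝ)^4) := by ring
    -- final bound on 1/D
    have hfinal : 1/D ≤ 9*(σ^2*h + h^(2*H)) * h^(-(2:ℝ)) * (n:ℝ)^(2*H-2) := by
      have hrw : 9*(σ^2*h + h^(2*H)) * h^(-(2:ℝ)) * (n:ℝ)^(2*H-2)
          = 9 * ((σ^2*h + h^(2*H)) * (n:ℝ)^(2*H)) / (h^2 * (n:ℝ)^2) := by
        rw [Real.rpow_neg hh.le, Real.rpow_two, Real.rpow_sub hnpos, Real.rpow_two]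
        field_simp
      rw [hrw, div_le_div_iff₀ hDpos (by positivity)]
      have h5 : h^4*(n:ℝ)^6/9 ≤ ((σ^2*h + h^(2*H)) * (n:ℝ)^(2*H) * (h^2*(n:ℝ)^4)) * D := by
        calc h^4*(n:ℝ)^6/9 ≤ N2^2 := by nlinarith [mul_le_mul hN2lb hN2lb (by positivity : (0:ℝ) ≤ h^2*(n:ℝ)^3/3) hN2pos.le]
          _ ≤ Q*D := hCS
          _ ≤ _ := mul_le_mul_of_nonneg_right hQub hDpos.le
      nlinarith [h5, mul_pos (pow_pos hh 2) (pow_pos hnpos 4)]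
    -- the variance equals 1/D
    have hyG : ∀ ω, t ⬝ᵥ (Γ⁻¹ *ᵥ (fun i => ϑ * ((i:ℝ)+1) * h - G ω i))
        = ϑ * D - (∑ i, y i * G ω i) := by
      intro ω
      have hw : (fun i : Fin n => ϑ * ((i:ℝ)+1) * h - G ω i) = ϑ • t - G ω := by
        funext i
        show ϑ * ((i:ℝ)+1) * h - G ω i = ϑ * (((i:ℝ)+1) * h) - G ω i
        ring
      rw [hw, Matrix.mulVec_sub, Matrix.mulVec_smul, dotProduct_sub,
        dotProduct_smul, smul_eq_mul, ← hy_def, ← hD_def]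
      congr 1
      rw [dot_symm Γ⁻¹ hinvsymT t (G ω), ← hy_def, dotProduct_comm]
      rfl
    have hvar : ∫ ω, ((t ⬝ᵥ (Γ⁻¹ *ᵥ fun i => ϑ * ((i:ℝ)+1) * h - G ω i)) / D - ϑ)^2 ∂μ
        = 1/D := by
      have hptw : ∀ ω, ((t ⬝ᵥ (Γ⁻¹ *ᵥ fun i => ϑ * ((i:ℝ)+1) * h - G ω i)) / D - ϑ)^2
          = (∑ i, y i * G ω i)^2 / D^2 := by
        intro ω
        rw [hyG ω]
        field_simp
        ring
      simp_rw [hptw]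
      rw [integral_div, hquad y, hΓy, dotProduct_comm, ← hD_def, sq]
      field_simp
    rw [hvar]
    exact hfinal
  · have h0 : Tendsto (fun x : ℝ => x ^ (-(2-2*H))) atTop (nhds 0) :=
      tendsto_rpow_neg_atTop (by linarith)
    have h1 : Tendsto (fun n : ℕ => ((n:ℝ)) ^ (2*H-2)) atTop (nhds 0) := by
      have h2 := h0.comp (tendsto_natCast_atTop_atTop (R := ℝ))
      simpa [Function.comp_def, show -(2-2*H) = 2*H-2 by ring] using h2
    have h3 := h1.const_mul (9*(σ^2*h + h^(2*H)) * h^(-(2:ℝ)))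
    simpa [mul_assoc] using h3
end
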